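/- arXiv:1906.08441 — 2 statements merged into one kernel-verified Lean document; each statement's English description precedes it below -/
import Mathlib

section
/- Let (X,φ) and (Y,ψ) be Smale spaces. If (X,φ) and (Y,ψ) are flip conjugate, then they are asymptotically continuous orbit equivalent. -/
open Filter Set Topology

noncomputable section

/-- Integer iterate of a homeomorphism. -/
def hIter {X : Type*} [TopologicalSpace X] (φ : X ≃ₜ X) (n : ℤ) (x : X) : X :=
  ((φ.toEquiv : Equiv.Perm X) ^ n) x

/-- The cocycle sums `f^n` of a function `f : X → ℤ` along the iterates of `φ`:
`f^n(x) = Σ_{i=0}^{n-1} f(φ^i(x))` for `n > 0`, `f^0 = 0`, and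
`f^n(x) = −Σ_{i=n}^{-1} f(φ^i(x))` for `n < 0`. -/
def cSum {X : Type*} [TopologicalSpace X] (φ : X ≃ₜ X) (f : X → ℤ) (n : ℤ) (x : X) : ℤ :=
  if 0 ≤ n then ∑ i ∈ Finset.range n.toNat, f (hIter φ i x)
  else -∑ i ∈ Finset.range (-n).toNat, f (hIter φ (n + i) x)

/-- Stable asymptotic pairs (limit definition). -/
def asympS {X : Type*} [MetricSpace X] (φ : X ≃ₜ X) : Set (X × X) :=
  {p | Tendsto (fun n : ℕ => dist (hIter φ n p.1) (hIter φ n p.2)) atTop (nhds 0)}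

/-- Unstable asymptotic pairs (limit definition). -/
def asympU {X : Type*} [MetricSpace X] (φ : X ≃ₜ X) : Set (X × X) :=
  {p | Tendsto (fun n : ℕ => dist (hIter φ (-(n : ℤ)) p.1) (hIter φ (-(n : ℤ)) p.2))
    atTop (nhds 0)}

/-- Asymptotic pairs (limit definition). -/
def asympA {X : Type*} [MetricSpace X] (φ : X ≃ₜ X) : Set (X × X) := asympS φ ∩ asympU φ

/-- The `ω`-limit set of `x`. -/
def omegaSet {X : Type*} [MetricSpace X] (φ : X ≃ₜ X) (x : X) : Set X :=
  {z | ∃ n : ℕ → ℕ, StrictMono n ∧ Tendsto (fun i => hIter φ (n i) x) atTop (nhds z)}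

/-- The `α`-limit set of `x`. -/
def alphaSet {X : Type*} [MetricSpace X] (φ : X ≃ₜ X) (x : X) : Set X :=
  {z | ∃ n : ℕ → ℤ, StrictAnti n ∧ Tendsto (fun i => hIter φ (n i) x) atTop (nhds z)}

/-- A Smale space structure on a compact metric space `X`. -/
structure SmaleSpace (X : Type*) [MetricSpace X] [CompactSpace X] where
  phi : X ≃ₜ X
  eps : ℝ
  lam : ℝ
  br : X → X → X
  eps_pos : 0 < eps
  lam_pos : 0 < lam
  lam_lt_one : lam < 1
  br_cont : ContinuousOn (fun p : X × X => br p.1 p.2) {p : X × X | dist p.1 p.2 < eps}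
  br_self : ∀ x : X, br x x = x
  br_assoc_left : ∀ x y z : X, dist x y < eps → dist (br x y) z < eps → dist x z < eps →
    br (br x y) z = br x z
  br_assoc_right : ∀ x y z : X, dist y z < eps → dist x (br y z) < eps → dist x z < eps →
    br x (br y z) = br x z
  phi_br : ∀ x y : X, dist x y < eps → dist (phi x) (phi y) < eps →
    phi (br x y) = br (phi x) (phi y)
  contract_s : ∀ x y z : X, br y x = y → dist x y < eps → br z x = z → dist x z < eps →
    dist (phi y) (phi z) ≤ lam * dist y z
  contract_u : ∀ x y z : X, br x y = y → dist x y < eps → br x z = z → dist x z < eps →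
    dist (phi.symm y) (phi.symm z) ≤ lam * dist y z

namespace SmaleSpace

variable {X Y : Type*} [MetricSpace X] [CompactSpace X] [MetricSpace Y] [CompactSpace Y]

/-- Local stable set `X^s(x,ε)`. -/
def Xs (S : SmaleSpace X) (x : X) (ε : ℝ) : Set X := {y | S.br y x = y ∧ dist x y < ε}

/-- Local unstable set `X^u(x,ε)`. -/
def Xu (S : SmaleSpace X) (x : X) (ε : ℝ) : Set X := {y | S.br x y = y ∧ dist x y < ε}

def Gs0 (S : SmaleSpace X) : Set (X × X) := {p | p.2 ∈ S.Xs p.1 S.eps}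

def Gu0 (S : SmaleSpace X) : Set (X × X) := {p | p.2 ∈ S.Xu p.1 S.eps}

/-- `G_φ^{s,n} = (φ×φ)^{-n}(G_φ^{s,0})`. -/
def GsN (S : SmaleSpace X) (n : ℤ) : Set (X × X) :=
  {p | (hIter S.phi n p.1, hIter S.phi n p.2) ∈ S.Gs0}

/-- `G_φ^{u,n} = (φ×φ)^{n}(G_φ^{u,0})`. -/
def GuN (S : SmaleSpace X) (n : ℤ) : Set (X × X) :=
  {p | (hIter S.phi (-n) p.1, hIter S.phi (-n) p.2) ∈ S.Gu0}

def GaN (S : SmaleSpace X) (n : ℤ) : Set (X × X) := S.GsN n ∩ S.GuN n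

/-- The asymptotic equivalence relation `G_φ^a = ⋃_{n ≥ 0} G_φ^{a,n}`. -/
def Ga (S : SmaleSpace X) : Set (X × X) := ⋃ n : ℕ, S.GaN n

lemma gaN_subset_ga (S : SmaleSpace X) (n : ℕ) : S.GaN n ⊆ S.Ga :=
  Set.subset_iUnion (fun k : ℕ => S.GaN k) n

/-- The inductive limit topology on `G_φ^a`: a set is open iff its intersection with each
`G_φ^{a,n}` is open in the subspace topology from `X × X`. -/
def gaTopology (S : SmaleSpace X) : TopologicalSpace ↥S.Ga :=
  ⨆ n : ℕ, TopologicalSpace.coinduced (Set.inclusion (S.gaN_subset_ga n)) inferInstance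

/-- Irreducibility of a Smale space. -/
def Irreducible (S : SmaleSpace X) : Prop :=
  ∀ U V : Set X, IsOpen U → U.Nonempty → IsOpen V → V.Nonempty →
    ∃ K : ℕ, ((hIter S.phi K '' U) ∩ V).Nonempty

def IsPeriodicPoint (S : SmaleSpace X) (x : X) : Prop :=
  ∃ p : ℕ, 0 < p ∧ hIter S.phi p x = x

/-- `h` is a flip conjugacy between `(X,φ)` and `(Y,ψ)`. -/
def IsFlipConjugacy (S : SmaleSpace X) (T : SmaleSpace Y) (h : X ≃ₜ Y) : Prop :=
  (∀ x, h (S.phi x) = T.phi (h x)) ∨ (∀ x, h (S.phi x) = T.phi.symm (h x))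

def FlipConjugate (S : SmaleSpace X) (T : SmaleSpace Y) : Prop :=
  ∃ h : X ≃ₜ Y, IsFlipConjugacy S T h

/-- An isomorphism of the principal étale groupoids `G_φ^a` and `G_ψ^a`:
a bijection which is a homeomorphism for the inductive limit topologies and preserves
the (equivalence relation) groupoid structure. -/
structure GaIso (S : SmaleSpace X) (T : SmaleSpace Y) where
  toEquiv : ↥S.Ga ≃ ↥T.Ga
  cont : @Continuous _ _ S.gaTopology T.gaTopology toEquiv
  cont_symm : @Continuous _ _ T.gaTopology S.gaTopology toEquiv.symm
  map_mul : ∀ p q r : ↥S.Ga, (p : X × X).2 = (q : X × X).1 →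
    (r : X × X) = ((p : X × X).1, (q : X × X).2) →
    (toEquiv p : Y × Y).2 = (toEquiv q : Y × Y).1 ∧
      (toEquiv r : Y × Y) = ((toEquiv p : Y × Y).1, (toEquiv q : Y × Y).2)

end SmaleSpace

namespace SmaleSpace

variable {X Y : Type*} [MetricSpace X] [CompactSpace X] [MetricSpace Y] [CompactSpace Y]

/-- The data of an asymptotic continuous orbit equivalence between two Smale spaces
`(X,φ)` and `(Y,ψ)`: a homeomorphism `h : X → Y`, continuous functions `c₁ : X → ℤ`,
`c₂ : Y → ℤ` and continuous two-cocycle functions `d₁ : G_φ^a → ℤ`, `d₂ : G_ψ^a → ℤ`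
satisfying conditions (1), (2) and (i)–(viii) of the definition of asymptotic continuous
orbit equivalence. -/
structure ACOEData (S : SmaleSpace X) (T : SmaleSpace Y) where
  h : X ≃ₜ Y
  c₁ : X → ℤ
  c₂ : Y → ℤ
  d₁ : X → X → ℤ
  d₂ : Y → Y → ℤ
  c₁_cont : Continuous c₁
  c₂_cont : Continuous c₂
  d₁_cocycle : ∀ x z w : X, (x, z) ∈ S.Ga → (z, w) ∈ S.Ga → d₁ x z + d₁ z w = d₁ x w
  d₂_cocycle : ∀ y w v : Y, (y, w) ∈ T.Ga → (w, v) ∈ T.Ga → d₂ y w + d₂ w v = d₂ y v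
  d₁_cont : @Continuous ↥S.Ga ℤ S.gaTopology _ fun p => d₁ (p : X × X).1 (p : X × X).2
  d₂_cont : @Continuous ↥T.Ga ℤ T.gaTopology _ fun p => d₂ (p : Y × Y).1 (p : Y × Y).2
  cocycle_eq₁ : ∀ (m : ℤ) (x z : X), (x, z) ∈ S.Ga →
    cSum S.phi c₁ m x + d₁ (hIter S.phi m x) (hIter S.phi m z)
      = cSum S.phi c₁ m z + d₁ x z
  cocycle_eq₂ : ∀ (m : ℤ) (y w : Y), (y, w) ∈ T.Ga →
    cSum T.phi c₂ m y + d₂ (hIter T.phi m y) (hIter T.phi m w)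
      = cSum T.phi c₂ m w + d₂ y w
  xi₁_mem : ∀ (n : ℤ) (x : X),
    (hIter T.phi (cSum S.phi c₁ n x) (h x), h (hIter S.phi n x)) ∈ T.Ga
  xi₁_cont : ∀ n : ℤ, @Continuous X ↥T.Ga _ T.gaTopology
    fun x => ⟨(hIter T.phi (cSum S.phi c₁ n x) (h x), h (hIter S.phi n x)), xi₁_mem n x⟩
  xi₂_mem : ∀ (n : ℤ) (y : Y),
    (hIter S.phi (cSum T.phi c₂ n y) (h.symm y), h.symm (hIter T.phi n y)) ∈ S.Ga
  xi₂_cont : ∀ n : ℤ, @Continuous Y ↥S.Ga _ S.gaTopology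
    fun y => ⟨(hIter S.phi (cSum T.phi c₂ n y) (h.symm y), h.symm (hIter T.phi n y)),
      xi₂_mem n y⟩
  eta₁_mem : ∀ x z : X, (x, z) ∈ S.Ga → (hIter T.phi (d₁ x z) (h x), h z) ∈ T.Ga
  eta₁_cont : @Continuous ↥S.Ga ↥T.Ga S.gaTopology T.gaTopology
    fun p => ⟨(hIter T.phi (d₁ (p : X × X).1 (p : X × X).2) (h (p : X × X).1),
      h (p : X × X).2), eta₁_mem (p : X × X).1 (p : X × X).2 p.2⟩
  eta₂_mem : ∀ y w : Y, (y, w) ∈ T.Ga → (hIter S.phi (d₂ y w) (h.symm y), h.symm w) ∈ S.Ga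
  eta₂_cont : @Continuous ↥T.Ga ↥S.Ga T.gaTopology S.gaTopology
    fun p => ⟨(hIter S.phi (d₂ (p : Y × Y).1 (p : Y × Y).2) (h.symm (p : Y × Y).1),
      h.symm (p : Y × Y).2), eta₂_mem (p : Y × Y).1 (p : Y × Y).2 p.2⟩
  cond_v : ∀ (n : ℤ) (x : X),
    cSum T.phi c₂ (cSum S.phi c₁ n x) (h x)
      + d₂ (hIter T.phi (cSum S.phi c₁ n x) (h x)) (h (hIter S.phi n x)) = n
  cond_vi : ∀ (n : ℤ) (y : Y),
    cSum S.phi c₁ (cSum T.phi c₂ n y) (h.symm y)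
      + d₁ (hIter S.phi (cSum T.phi c₂ n y) (h.symm y)) (h.symm (hIter T.phi n y)) = n
  cond_vii : ∀ x z : X, (x, z) ∈ S.Ga →
    cSum T.phi c₂ (d₁ x z) (h x) + d₂ (hIter T.phi (d₁ x z) (h x)) (h z) = 0
  cond_viii : ∀ y w : Y, (y, w) ∈ T.Ga →
    cSum S.phi c₁ (d₂ y w) (h.symm y) + d₁ (hIter S.phi (d₂ y w) (h.symm y)) (h.symm w) = 0

/-- Asymptotic continuous orbit equivalence of Smale spaces. -/
def ACOE (S : SmaleSpace X) (T : SmaleSpace Y) : Prop := Nonempty (ACOEData S T)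

/-- Asymptotic flip conjugacy: asymptotic continuous orbit equivalence in which the cocycle
data can be chosen as `c₁ ≡ 1, c₂ ≡ 1, d₁ ≡ 0, d₂ ≡ 0` or as
`c₁ ≡ −1, c₂ ≡ −1, d₁ ≡ 0, d₂ ≡ 0`. -/
def AsymptoticallyFlipConjugate (S : SmaleSpace X) (T : SmaleSpace Y) : Prop :=
  ∃ A : ACOEData S T,
    (A.c₁ = (fun _ => 1) ∧ A.c₂ = (fun _ => 1) ∧
      A.d₁ = (fun _ _ => 0) ∧ A.d₂ = (fun _ _ => 0)) ∨
    (A.c₁ = (fun _ => -1) ∧ A.c₂ = (fun _ => -1) ∧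
      A.d₁ = (fun _ _ => 0) ∧ A.d₂ = (fun _ _ => 0))

end SmaleSpace
namespace SmaleSpace

variable {X Y : Type*} [MetricSpace X] [CompactSpace X] [MetricSpace Y] [CompactSpace Y]

lemma hIter_zero {X : Type*} [TopologicalSpace X] (φ : X ≃ₜ X) (x : X) : hIter φ 0 x = x := by
  simp [hIter]

lemma hIter_add {X : Type*} [TopologicalSpace X] (φ : X ≃ₜ X) (m n : ℤ) (x : X) :
    hIter φ (m + n) x = hIter φ m (hIter φ n x) := by
  simp [hIter, zpow_add, Equiv.Perm.mul_apply]

lemma hIter_one {X : Type*} [TopologicalSpace X] (φ : X ≃ₜ X) (x : X) : hIter φ 1 x = φ x := by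
  simp [hIter]

lemma hIter_neg_one {X : Type*} [TopologicalSpace X] (φ : X ≃ₜ X) (x : X) :
    hIter φ (-1) x = φ.symm x := by
  simp [hIter, Equiv.Perm.inv_def]

lemma hIter_symm {X : Type*} [TopologicalSpace X] (φ : X ≃ₜ X) (n : ℤ) (x : X) :
    hIter φ.symm n x = hIter φ (-n) x := by
  have : (φ.symm.toEquiv : Equiv.Perm X) = (φ.toEquiv : Equiv.Perm X)⁻¹ := rfl
  simp [hIter, this, inv_zpow, zpow_neg]

lemma continuous_hIter {X : Type*} [TopologicalSpace X] (φ : X ≃ₜ X) (n : ℤ) :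
    Continuous (hIter φ n) := by
  induction n using Int.induction_on with
  | zero =>
      have : hIter φ 0 = fun x : X => x := by funext x; exact hIter_zero φ x
      rw [this]; exact continuous_id
  | succ k ih =>
      have h1 : hIter φ ((k:ℤ) + 1) = fun x => φ (hIter φ k x) := by
        funext x
        rw [show ((k:ℤ) + 1) = 1 + (k:ℤ) by ring, hIter_add, hIter_one]
      rw [h1]; exact φ.continuous.comp ih
  | pred k ih =>
      have h1 : hIter φ (-(k:ℤ) - 1) = fun x => φ.symm (hIter φ (-(k:ℤ)) x) := by
        funext x
        rw [show (-(k:ℤ) - 1) = (-1) + (-(k:ℤ)) by ring, hIter_add, hIter_neg_one]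
      rw [h1]; exact φ.symm.continuous.comp ih

lemma cSum_const {X : Type*} [TopologicalSpace X] (φ : X ≃ₜ X) (c : ℤ) (n : ℤ) (x : X) :
    cSum φ (fun _ => c) n x = n * c := by
  unfold cSum
  split_ifs with hn
  · simp [Finset.sum_const, nsmul_eq_mul, Int.toNat_of_nonneg hn]
  · rw [Finset.sum_const, Finset.card_range, nsmul_eq_mul,
      Int.toNat_of_nonneg (by omega : (0:ℤ) ≤ -n)]
    ring

end SmaleSpace
namespace SmaleSpace

variable {X Y : Type*} [MetricSpace X] [CompactSpace X] [MetricSpace Y] [CompactSpace Y]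

/-- Diagonal points lie in `G^{a,0}`. -/
lemma diag_mem_gaN_zero (S : SmaleSpace X) (w : X) : (w, w) ∈ S.GaN 0 := by
  constructor
  · show (hIter S.phi 0 w, hIter S.phi 0 w) ∈ S.Gs0
    rw [hIter_zero]
    exact ⟨S.br_self w, by simpa using S.eps_pos⟩
  · show (hIter S.phi (-0) w, hIter S.phi (-0) w) ∈ S.Gu0
    rw [neg_zero, hIter_zero]
    exact ⟨S.br_self w, by simpa using S.eps_pos⟩

lemma diag_mem_ga (S : SmaleSpace X) (w : X) : (w, w) ∈ S.Ga :=
  S.gaN_subset_ga 0 (by simpa using S.diag_mem_gaN_zero w)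

/-- Forward iteration of stably related pairs: brackets are preserved and the distance
contracts. -/
lemma gs0_iter (S : SmaleSpace X) {a b : X} (hbr : S.br b a = b) (hd : dist a b < S.eps)
    (k : ℕ) :
    S.br (hIter S.phi k b) (hIter S.phi k a) = hIter S.phi k b ∧
      dist (hIter S.phi k a) (hIter S.phi k b) ≤ S.lam ^ k * dist a b := by
  induction k with
  | zero =>
      constructor
      · simpa [hIter_zero] using hbr
      · simp [hIter_zero]
  | succ k ih =>
      obtain ⟨ihbr, ihd⟩ := ih
      set A := hIter S.phi k a with hA
      set B := hIter S.phi k b with hB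
      have hlam1 : S.lam ^ k ≤ 1 := pow_le_one₀ (le_of_lt S.lam_pos) (le_of_lt S.lam_lt_one)
      have hdnn : (0:ℝ) ≤ dist a b := dist_nonneg
      have hAB : dist A B < S.eps :=
        lt_of_le_of_lt (le_trans ihd (by nlinarith)) hd
      have hcontr : dist (S.phi B) (S.phi A) ≤ S.lam * dist B A := by
        refine S.contract_s A B A ihbr hAB (S.br_self A) ?_
        simpa using S.eps_pos
      have hd' : dist (S.phi A) (S.phi B) ≤ S.lam ^ (k+1) * dist a b := by
        rw [dist_comm]
        calc dist (S.phi B) (S.phi A) ≤ S.lam * dist B A := hcontr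
        _ = S.lam * dist A B := by rw [dist_comm]
        _ ≤ S.lam * (S.lam ^ k * dist a b) := by
            exact mul_le_mul_of_nonneg_left ihd (le_of_lt S.lam_pos)
        _ = S.lam ^ (k+1) * dist a b := by ring
      have hABlt : dist (S.phi A) (S.phi B) < S.eps := by
        have h1 : S.lam ^ (k+1) ≤ 1 := pow_le_one₀ (le_of_lt S.lam_pos) (le_of_lt S.lam_lt_one)
        exact lt_of_le_of_lt (le_trans hd' (by nlinarith)) hd
      have hbr' : S.phi (S.br B A) = S.br (S.phi B) (S.phi A) :=
        S.phi_br B A (by rwa [dist_comm]) (by rwa [dist_comm])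
      have hsucc : ∀ y : X, hIter S.phi (k+1 : ℕ) y = S.phi (hIter S.phi k y) := by
        intro y
        rw [show ((k+1 : ℕ) : ℤ) = 1 + (k:ℤ) by push_cast; ring, hIter_add, hIter_one]
      constructor
      · rw [hsucc a, hsucc b, ← hA, ← hB, ← hbr', ihbr]
      · rw [hsucc a, hsucc b, ← hA, ← hB]; exact hd'

/-- The reversed Smale space `(X, φ⁻¹)` with the bracket arguments swapped. -/
def rev (S : SmaleSpace X) : SmaleSpace X where
  phi := S.phi.symm
  eps := S.eps
  lam := S.lam
  br := fun x y => S.br y x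
  eps_pos := S.eps_pos
  lam_pos := S.lam_pos
  lam_lt_one := S.lam_lt_one
  br_cont := by
    have hsw : ContinuousOn (fun p : X × X => (p.2, p.1))
        {p : X × X | dist p.1 p.2 < S.eps} := (continuous_snd.prodMk continuous_fst).continuousOn
    refine ContinuousOn.comp S.br_cont hsw ?_
    intro p hp
    simpa [dist_comm] using hp
  br_self := fun x => S.br_self x
  br_assoc_left := by
    intro x y z h1 h2 h3
    exact S.br_assoc_right z y x (by rwa [dist_comm]) (by rwa [dist_comm]) (by rwa [dist_comm])
  br_assoc_right := by
    intro x y z h1 h2 h3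
    exact S.br_assoc_left z y x (by rwa [dist_comm]) (by rwa [dist_comm]) (by rwa [dist_comm])
  phi_br := by
    intro x y h1 h2
    have := S.phi_br (S.phi.symm y) (S.phi.symm x) (by simpa [dist_comm] using h2)
      (by simpa [dist_comm] using h1)
    apply_fun S.phi using S.phi.injective
    simpa using this.symm
  contract_s := by
    intro x y z h1 h2 h3 h4
    exact S.contract_u x y z h1 h2 h3 h4
  contract_u := by
    intro x y z h1 h2 h3 h4
    simpa using S.contract_s x y z h1 h2 h3 h4

@[simp] lemma rev_phi (S : SmaleSpace X) : S.rev.phi = S.phi.symm := rfl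
@[simp] lemma rev_eps (S : SmaleSpace X) : S.rev.eps = S.eps := rfl
@[simp] lemma rev_lam (S : SmaleSpace X) : S.rev.lam = S.lam := rfl
@[simp] lemma rev_br (S : SmaleSpace X) (x y : X) : S.rev.br x y = S.br y x := rfl

lemma rev_gs0 (S : SmaleSpace X) : S.rev.Gs0 = S.Gu0 := rfl

lemma rev_gu0 (S : SmaleSpace X) : S.rev.Gu0 = S.Gs0 := rfl

lemma rev_gsN (S : SmaleSpace X) (n : ℤ) : S.rev.GsN n = S.GuN n := by
  ext p
  show (hIter S.rev.phi n p.1, hIter S.rev.phi n p.2) ∈ S.rev.Gs0 ↔ _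
  rw [rev_gs0, rev_phi, hIter_symm, hIter_symm]
  exact Iff.rfl

lemma rev_guN (S : SmaleSpace X) (n : ℤ) : S.rev.GuN n = S.GsN n := by
  ext p
  show (hIter S.rev.phi (-n) p.1, hIter S.rev.phi (-n) p.2) ∈ S.rev.Gu0 ↔ _
  rw [rev_gu0, rev_phi, hIter_symm, hIter_symm, neg_neg]
  exact Iff.rfl

lemma rev_gaN (S : SmaleSpace X) (n : ℤ) : S.rev.GaN n = S.GaN n := by
  rw [GaN, GaN, rev_gsN, rev_guN, Set.inter_comm]

lemma rev_ga (S : SmaleSpace X) : S.rev.Ga = S.Ga := by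
  unfold Ga
  simp only [rev_gaN]

/-- Monotonicity of the stable groupoid levels. -/
lemma gsN_mono (S : SmaleSpace X) {n m : ℤ} (hnm : n ≤ m) : S.GsN n ⊆ S.GsN m := by
  intro p hp
  obtain ⟨hbr, hd⟩ := hp
  set k : ℕ := (m - n).toNat with hk
  have hmk : m = (k : ℤ) + n := by simp [hk]; omega
  have := S.gs0_iter hbr hd k
  show (hIter S.phi m p.1, hIter S.phi m p.2) ∈ S.Gs0
  rw [hmk, hIter_add, hIter_add]
  refine ⟨this.1, ?_⟩
  have hlam1 : S.lam ^ k ≤ 1 := pow_le_one₀ (le_of_lt S.lam_pos) (le_of_lt S.lam_lt_one)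
  have hdnn : (0:ℝ) ≤ dist (hIter S.phi n p.1) (hIter S.phi n p.2) := dist_nonneg
  exact lt_of_le_of_lt (le_trans this.2 (by nlinarith)) hd

lemma guN_mono (S : SmaleSpace X) {n m : ℤ} (hnm : n ≤ m) : S.GuN n ⊆ S.GuN m := by
  rw [← rev_gsN, ← rev_gsN]
  exact S.rev.gsN_mono hnm

lemma gaN_mono (S : SmaleSpace X) {n m : ℤ} (hnm : n ≤ m) : S.GaN n ⊆ S.GaN m :=
  Set.inter_subset_inter (S.gsN_mono hnm) (S.guN_mono hnm)

end SmaleSpace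
namespace SmaleSpace

variable {X Y : Type*} [MetricSpace X] [CompactSpace X] [MetricSpace Y] [CompactSpace Y]

/-- Bracket modulus: points at small distance have brackets close to both arguments. -/
lemma bracket_modulus (S : SmaleSpace X) {ε : ℝ} (hε : 0 < ε) :
    ∃ δ > 0, δ ≤ S.eps / 2 ∧ ∀ x y : X, dist x y < δ →
      dist (S.br x y) y < ε ∧ dist (S.br x y) x < ε := by
  have hKc : IsCompact {p : X × X | dist p.1 p.2 ≤ S.eps / 2} := by
    have : IsClosed {p : X × X | dist p.1 p.2 ≤ S.eps / 2} :=
      isClosed_le (by fun_prop) continuous_const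
    exact this.isCompact
  set K : Set (X × X) := {p : X × X | dist p.1 p.2 ≤ S.eps / 2} with hK
  have hKsub : K ⊆ {p : X × X | dist p.1 p.2 < S.eps} := by
    intro p hp
    rw [hK, Set.mem_setOf_eq] at hp
    exact lt_of_le_of_lt hp (by linarith [S.eps_pos])
  have hcont : ContinuousOn (fun p : X × X => S.br p.1 p.2) K := S.br_cont.mono hKsub
  have huc := hKc.uniformContinuousOn_of_continuous hcont
  rw [Metric.uniformContinuousOn_iff] at huc
  obtain ⟨δ₀, hδ₀, hδ⟩ := huc ε hε
  refine ⟨min δ₀ (S.eps / 2), lt_min hδ₀ (half_pos S.eps_pos), min_le_right _ _, ?_⟩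
  intro x y hxy
  have hxy₀ : dist x y < δ₀ := lt_of_lt_of_le hxy (min_le_left _ _)
  have hxy₂ : dist x y ≤ S.eps / 2 := le_of_lt (lt_of_lt_of_le hxy (min_le_right _ _))
  constructor
  · have h1 : ((x, y) : X × X) ∈ K := hxy₂
    have h2 : ((y, y) : X × X) ∈ K := by
      show dist y y ≤ S.eps / 2
      simp [le_of_lt (half_pos S.eps_pos)]
    have hd : dist ((x, y) : X × X) ((y, y) : X × X) < δ₀ := by
      rw [Prod.dist_eq]
      apply max_lt
      · simpa using hxy₀
      · simpa using hδ₀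
    have := hδ _ h1 _ h2 hd
    simpa [S.br_self] using this
  · have h1 : ((x, y) : X × X) ∈ K := hxy₂
    have h2 : ((x, x) : X × X) ∈ K := by
      show dist x x ≤ S.eps / 2
      simp [le_of_lt (half_pos S.eps_pos)]
    have hd : dist ((x, y) : X × X) ((x, x) : X × X) < δ₀ := by
      rw [Prod.dist_eq]
      apply max_lt
      · simpa using hδ₀
      · simpa [dist_comm] using hxy₀
    have := hδ _ h1 _ h2 hd
    simpa [S.br_self] using this

/-- Expansivity: if two forward orbits stay uniformly close, the points are stably related. -/
lemma exists_delta (S : SmaleSpace X) :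
    ∃ δ > 0, δ < S.eps ∧ ∀ y w : X,
      (∀ k : ℕ, dist (hIter S.phi k y) (hIter S.phi k w) < δ) → (y, w) ∈ S.Gs0 := by
  have heps4 : 0 < S.eps / 4 := by linarith [S.eps_pos]
  obtain ⟨δ₀, hδ₀pos, hδ₀le, hδ₀⟩ := S.bracket_modulus heps4
  refine ⟨min δ₀ (S.eps / 4), lt_min hδ₀pos (by linarith [S.eps_pos]), ?_, ?_⟩
  · exact lt_of_le_of_lt (min_le_right _ _) (by linarith [S.eps_pos])
  intro y w hclose
  set δ := min δ₀ (S.eps / 4) with hδdef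
  have hδpos : 0 < δ := by positivity
  have hδle₀ : δ ≤ δ₀ := min_le_left _ _
  have hδle4 : δ ≤ S.eps / 4 := min_le_right _ _
  have hδlte : δ < S.eps := lt_of_le_of_lt hδle4 (by linarith [S.eps_pos])
  have h0 : dist y w < δ := by simpa [hIter_zero] using hclose 0
  set v := S.br w y with hv
  have hwy : dist w y < δ₀ := by rw [dist_comm]; exact lt_of_lt_of_le h0 hδle₀
  obtain ⟨hvy, hvw⟩ := hδ₀ w y hwy
  -- hvy : dist v y < eps/4, hvw : dist v w < eps/4
  have hwylt : dist w y < S.eps := by rw [dist_comm]; exact lt_trans h0 hδlte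
  -- v is stably related to y
  have hbs : S.br v y = v := by
    refine S.br_assoc_left w y y hwylt ?_ hwylt
    exact lt_of_lt_of_le hvy (by linarith [S.eps_pos])
  have hdyv : dist y v < S.eps := by
    rw [dist_comm]; exact lt_of_lt_of_le hvy (by linarith [S.eps_pos])
  -- v is unstably related to w
  have hbu : S.br w v = v := by
    refine S.br_assoc_right w w y hwylt ?_ hwylt
    rw [dist_comm]
    exact lt_trans hvw (by linarith [S.eps_pos])
  -- forward bounds for the pair (w, v)
  have hstab := fun k => S.gs0_iter hbs hdyv k
  have hyv4 : dist y v ≤ S.eps / 4 := by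
    rw [dist_comm]; exact le_of_lt (lt_of_lt_of_le hvy (le_refl _))
  have hWV : ∀ k : ℕ, dist (hIter S.phi k w) (hIter S.phi k v) < S.eps / 2 := by
    intro k
    have h1 : dist (hIter S.phi k y) (hIter S.phi k v) ≤ S.eps / 4 := by
      refine le_trans (hstab k).2 ?_
      have hlam1 : S.lam ^ k ≤ 1 := pow_le_one₀ (le_of_lt S.lam_pos) (le_of_lt S.lam_lt_one)
      nlinarith [dist_nonneg (x := y) (y := v)]
    calc dist (hIter S.phi k w) (hIter S.phi k v)
        ≤ dist (hIter S.phi k w) (hIter S.phi k y) + dist (hIter S.phi k y) (hIter S.phi k v) :=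
          dist_triangle _ _ _
      _ < δ + S.eps / 4 := by
          have := hclose k
          rw [dist_comm] at this
          linarith
      _ ≤ S.eps / 2 := by linarith
  -- the unstable bracket is preserved forward
  have hsucc : ∀ (z : X) (k : ℕ), hIter S.phi (k+1 : ℕ) z = S.phi (hIter S.phi k z) := by
    intro z k
    rw [show ((k+1 : ℕ) : ℤ) = 1 + (k:ℤ) by push_cast; ring, hIter_add, hIter_one]
  have hU : ∀ k : ℕ, S.br (hIter S.phi k w) (hIter S.phi k v) = hIter S.phi k v := by
    intro k
    induction k with
    | zero => simpa [hIter_zero] using hbu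
    | succ k ih =>
        have h1 : dist (hIter S.phi k w) (hIter S.phi k v) < S.eps :=
          lt_of_lt_of_le (hWV k) (by linarith [S.eps_pos])
        have h2 : dist (S.phi (hIter S.phi k w)) (S.phi (hIter S.phi k v)) < S.eps := by
          rw [← hsucc, ← hsucc]
          exact lt_of_lt_of_le (hWV (k+1)) (by linarith [S.eps_pos])
        have := S.phi_br (hIter S.phi k w) (hIter S.phi k v) h1 h2
        rw [ih] at this
        rw [hsucc, hsucc, ← this]
    -- backward contraction: dist w v ≤ lam^k * dist (φ^k w) (φ^k v)
  have hback : ∀ k : ℕ, dist w v ≤ S.lam ^ k * dist (hIter S.phi k w) (hIter S.phi k v) := by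
    intro k
    induction k with
    | zero => simp [hIter_zero]
    | succ k ih =>
        have h1 : dist (hIter S.phi k w) (hIter S.phi k v) < S.eps :=
          lt_of_lt_of_le (hWV k) (by linarith [S.eps_pos])
        have h2 : dist (hIter S.phi (k+1:ℕ) w) (hIter S.phi (k+1:ℕ) v) < S.eps :=
          lt_of_lt_of_le (hWV (k+1)) (by linarith [S.eps_pos])
        have hc := S.contract_u (hIter S.phi (k+1:ℕ) w) (hIter S.phi (k+1:ℕ) w)
          (hIter S.phi (k+1:ℕ) v) (S.br_self _) (by simpa using S.eps_pos) (hU (k+1)) h2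
        have hsymm : ∀ z : X, S.phi.symm (hIter S.phi (k+1:ℕ) z) = hIter S.phi k z := by
          intro z
          rw [hsucc z k]
          exact S.phi.symm_apply_apply _
        rw [hsymm, hsymm] at hc
        calc dist w v ≤ S.lam ^ k * dist (hIter S.phi k w) (hIter S.phi k v) := ih
          _ ≤ S.lam ^ k * (S.lam * dist (hIter S.phi (k+1:ℕ) w) (hIter S.phi (k+1:ℕ) v)) := by
              exact mul_le_mul_of_nonneg_left hc (le_of_lt (pow_pos S.lam_pos k))
          _ = S.lam ^ (k+1) * dist (hIter S.phi (k+1:ℕ) w) (hIter S.phi (k+1:ℕ) v) := by ring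
  -- conclude w = v
  have hwv : w = v := by
    have hdist0 : dist w v ≤ 0 := by
      by_contra hpos
      push_neg at hpos
      obtain ⟨k, hk⟩ := exists_pow_lt_of_lt_one (div_pos hpos (half_pos S.eps_pos)) S.lam_lt_one
      have h1 : dist w v ≤ S.lam ^ k * (S.eps / 2) := by
        refine le_trans (hback k) ?_
        exact mul_le_mul_of_nonneg_left (le_of_lt (hWV k)) (le_of_lt (pow_pos S.lam_pos k))
      rw [lt_div_iff₀ (half_pos S.eps_pos)] at hk
      linarith
    exact eq_of_dist_eq_zero (le_antisymm hdist0 dist_nonneg)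
  refine ⟨?_, ?_⟩
  · show S.br w y = w
    rw [← hwv] at hv
    exact hv.symm
  · exact lt_trans h0 hδlte

end SmaleSpace
namespace SmaleSpace

variable {X Y : Type*} [MetricSpace X] [CompactSpace X] [MetricSpace Y] [CompactSpace Y]

lemma conj_hIter {φ : X ≃ₜ X} {ψ : Y ≃ₜ Y} {h : X ≃ₜ Y}
    (hc : ∀ x, h (φ x) = ψ (h x)) (j : ℤ) (x : X) :
    h (hIter φ j x) = hIter ψ j (h x) := by
  have hcinv : ∀ x, h (φ.symm x) = ψ.symm (h x) := by
    intro x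
    have := hc (φ.symm x)
    rw [φ.apply_symm_apply] at this
    rw [this, ψ.symm_apply_apply]
  induction j using Int.induction_on with
  | zero => rw [hIter_zero, hIter_zero]
  | succ k ih =>
      rw [show ((k:ℤ) + 1) = 1 + (k:ℤ) by ring, hIter_add, hIter_add, hIter_one, hIter_one,
        hc, ih]
  | pred k ih =>
      rw [show (-(k:ℤ) - 1) = (-1) + (-(k:ℤ)) by ring, hIter_add, hIter_add, hIter_neg_one,
        hIter_neg_one, hcinv, ih]

/-- A conjugacy sends `G^{s,n}` into `G^{s,m}` for some uniform `m`. -/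
lemma key_s (S : SmaleSpace X) (T : SmaleSpace Y) (h : X ≃ₜ Y)
    (hc : ∀ x, h (S.phi x) = T.phi (h x)) (n : ℕ) :
    ∃ m : ℕ, ∀ p : X × X, p ∈ S.GsN (n : ℤ) → (h p.1, h p.2) ∈ T.GsN (m : ℤ) := by
  obtain ⟨δ, hδpos, hδeps, hδ⟩ := T.exists_delta
  have huc := CompactSpace.uniformContinuous_of_continuous h.continuous
  rw [Metric.uniformContinuous_iff] at huc
  obtain ⟨ρ, hρpos, hρ⟩ := huc δ hδpos
  obtain ⟨K, hK⟩ := exists_pow_lt_of_lt_one (div_pos hρpos S.eps_pos) S.lam_lt_one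
  have hKe : S.lam ^ K * S.eps < ρ := by
    rw [lt_div_iff₀ S.eps_pos] at hK
    linarith
  refine ⟨n + K, ?_⟩
  rintro ⟨x, z⟩ hp
  obtain ⟨hbr, hd⟩ := hp
  show (hIter T.phi (↑(n+K)) (h x), hIter T.phi (↑(n+K)) (h z)) ∈ T.Gs0
  apply hδ
  intro k
  have hiterX : ∀ (u : X) (k : ℕ),
      hIter S.phi (↑(K + k) : ℤ) (hIter S.phi (↑n) u) = hIter S.phi (↑(n + K + k)) u := by
    intro u k
    rw [← hIter_add]
    congr 1
    push_cast
    ring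
  have hdec : dist (hIter S.phi (↑(n + K + k)) x) (hIter S.phi (↑(n + K + k)) z) < ρ := by
    have := (S.gs0_iter hbr hd (K + k)).2
    rw [hiterX x, hiterX z] at this
    refine lt_of_le_of_lt this ?_
    have hlam : S.lam ^ (K + k) ≤ S.lam ^ K := by
      exact pow_le_pow_of_le_one (le_of_lt S.lam_pos) (le_of_lt S.lam_lt_one) (by omega)
    have hdnn : (0:ℝ) ≤ dist (hIter S.phi (↑n) x) (hIter S.phi (↑n) z) := dist_nonneg
    have hpK : (0:ℝ) < S.lam ^ (K + k) := pow_pos S.lam_pos _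
    nlinarith
  have hstep : ∀ u : X, hIter T.phi (↑k) (hIter T.phi (↑(n+K)) (h u))
      = h (hIter S.phi (↑(n + K + k)) u) := by
    intro u
    rw [← hIter_add, conj_hIter hc]
    congr 1
    push_cast
    ring
  rw [hstep x, hstep z]
  exact hρ hdec

lemma rev_conj {S : SmaleSpace X} {T : SmaleSpace Y} {h : X ≃ₜ Y}
    (hc : ∀ x, h (S.phi x) = T.phi (h x)) :
    ∀ x, h (S.rev.phi x) = T.rev.phi (h x) := by
  intro x
  show h (S.phi.symm x) = T.phi.symm (h x)
  have := hc (S.phi.symm x)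
  rw [S.phi.apply_symm_apply] at this
  rw [this, T.phi.symm_apply_apply]

/-- A conjugacy sends `G^{a,n}` into `G^{a,m}` for some uniform `m`. -/
lemma key (S : SmaleSpace X) (T : SmaleSpace Y) (h : X ≃ₜ Y)
    (hc : ∀ x, h (S.phi x) = T.phi (h x)) (n : ℕ) :
    ∃ m : ℕ, ∀ p : X × X, p ∈ S.GaN (n : ℤ) → (h p.1, h p.2) ∈ T.GaN (m : ℤ) := by
  obtain ⟨ms, hms⟩ := key_s S T h hc n
  obtain ⟨mu, hmu⟩ := key_s S.rev T.rev h (rev_conj hc) n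
  refine ⟨max ms mu, ?_⟩
  rintro p ⟨hs, hu⟩
  constructor
  · exact T.gsN_mono (by exact_mod_cast le_max_left ms mu) (hms p hs)
  · have h1 : p ∈ S.rev.GsN (n : ℤ) := by rw [rev_gsN]; exact hu
    have h2 := hmu p h1
    rw [rev_gsN] at h2
    exact T.guN_mono (by exact_mod_cast le_max_right ms mu) h2

lemma key_ga (S : SmaleSpace X) (T : SmaleSpace Y) (h : X ≃ₜ Y)
    (hc : ∀ x, h (S.phi x) = T.phi (h x)) :
    ∀ p : X × X, p ∈ S.Ga → (h p.1, h p.2) ∈ T.Ga := by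
  intro p hp
  rw [Ga, Set.mem_iUnion] at hp
  obtain ⟨n, hn⟩ := hp
  obtain ⟨m, hm⟩ := key S T h hc n
  exact T.gaN_subset_ga m (hm p hn)

end SmaleSpace
namespace SmaleSpace

variable {X Y : Type*} [MetricSpace X] [CompactSpace X] [MetricSpace Y] [CompactSpace Y]

lemma continuous_ga_mk {Z : Type*} [TopologicalSpace Z] (T : SmaleSpace Y)
    (f : Z → ↥T.Ga) (m : ℕ) (hmem : ∀ z, (f z : Y × Y) ∈ T.GaN (m : ℤ))
    (hcont : Continuous fun z => (f z : Y × Y)) :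
    @Continuous _ _ _ T.gaTopology f := by
  have h1 : Continuous (fun z => (⟨(f z : Y × Y), hmem z⟩ : ↥(T.GaN (m : ℤ)))) :=
    hcont.subtype_mk _
  have h2 : @Continuous ↥(T.GaN ((m:ℕ) : ℤ)) ↥T.Ga _ T.gaTopology
      (Set.inclusion (T.gaN_subset_ga m)) := by
    rw [gaTopology]
    exact continuous_iSup_rng continuous_coinduced_rng
  have : f = (Set.inclusion (T.gaN_subset_ga m)) ∘
      (fun z => (⟨(f z : Y × Y), hmem z⟩ : ↥(T.GaN (m : ℤ)))) := by
    funext z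
    rfl
  rw [this]
  exact @Continuous.comp Z ↥(T.GaN ((m:ℕ) : ℤ)) ↥T.Ga _ _ T.gaTopology _ _ h2 h1

lemma continuous_ga_dom {W : Type*} {tw : TopologicalSpace W} (S : SmaleSpace X)
    (f : ↥S.Ga → W)
    (hf : ∀ n : ℕ, @Continuous _ _ _ tw (f ∘ Set.inclusion (S.gaN_subset_ga n))) :
    @Continuous _ _ S.gaTopology tw f := by
  rw [gaTopology, continuous_iSup_dom]
  intro n
  rw [continuous_coinduced_dom]
  exact hf n

end SmaleSpace
namespace SmaleSpace

variable {X Y : Type*} [MetricSpace X] [CompactSpace X] [MetricSpace Y] [CompactSpace Y]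

/-- Construction of ACOE data from a (possibly time-reversing) conjugacy. -/
def acoe_mk (S : SmaleSpace X) (T : SmaleSpace Y) (h : X ≃ₜ Y) (e : ℤ)
    (he : e * e = 1)
    (hconj : ∀ (j : ℤ) (x : X), h (hIter S.phi j x) = hIter T.phi (e * j) (h x))
    (hkey : ∀ n : ℕ, ∃ m : ℕ, ∀ p : X × X,
      p ∈ S.GaN (n : ℤ) → (h p.1, h p.2) ∈ T.GaN (m : ℤ))
    (hkey' : ∀ n : ℕ, ∃ m : ℕ, ∀ p : Y × Y,
      p ∈ T.GaN (n : ℤ) → (h.symm p.1, h.symm p.2) ∈ S.GaN (m : ℤ)) :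
    ACOEData S T := by
  have hconj' : ∀ (j : ℤ) (y : Y), h.symm (hIter T.phi j y) = hIter S.phi (e * j) (h.symm y) := by
    intro j y
    apply h.injective
    rw [h.apply_symm_apply, hconj, ← mul_assoc, he, one_mul, h.apply_symm_apply]
  have hGa : ∀ p : X × X, p ∈ S.Ga → (h p.1, h p.2) ∈ T.Ga := by
    intro p hp
    rw [Ga, Set.mem_iUnion] at hp
    obtain ⟨n, hn⟩ := hp
    obtain ⟨m, hm⟩ := hkey n
    exact T.gaN_subset_ga m (hm p hn)
  have hGa' : ∀ p : Y × Y, p ∈ T.Ga → (h.symm p.1, h.symm p.2) ∈ S.Ga := by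
    intro p hp
    rw [Ga, Set.mem_iUnion] at hp
    obtain ⟨n, hn⟩ := hp
    obtain ⟨m, hm⟩ := hkey' n
    exact S.gaN_subset_ga m (hm p hn)
  refine
  { h := h
    c₁ := fun _ => e
    c₂ := fun _ => e
    d₁ := fun _ _ => 0
    d₂ := fun _ _ => 0
    c₁_cont := continuous_const
    c₂_cont := continuous_const
    d₁_cocycle := by intro x z w _ _; simp
    d₂_cocycle := by intro y w v _ _; simp
    d₁_cont := @continuous_const _ _ S.gaTopology _ _
    d₂_cont := @continuous_const _ _ T.gaTopology _ _
    cocycle_eq₁ := by intro m x z _; simp [cSum_const]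
    cocycle_eq₂ := by intro m y w _; simp [cSum_const]
    xi₁_mem := by
      intro n x
      rw [cSum_const, hconj n x, mul_comm n e]
      exact T.diag_mem_ga _
    xi₁_cont := ?_
    xi₂_mem := by
      intro n y
      rw [cSum_const, hconj' n y, mul_comm n e]
      exact S.diag_mem_ga _
    xi₂_cont := ?_
    eta₁_mem := by
      intro x z hxz
      have := hGa (x, z) hxz
      simpa [hIter_zero] using this
    eta₁_cont := ?_
    eta₂_mem := by
      intro y w hyw
      have := hGa' (y, w) hyw
      simpa [hIter_zero] using this
    eta₂_cont := ?_
    cond_v := by intro n x; simp [cSum_const, mul_assoc, he]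
    cond_vi := by intro n y; simp [cSum_const, mul_assoc, he]
    cond_vii := by intro x z _; simp [cSum_const]
    cond_viii := by intro y w _; simp [cSum_const] }
  · -- xi₁_cont
    intro n
    apply continuous_ga_mk T _ 0
    · intro x
      show (hIter T.phi (cSum S.phi (fun _ => e) n x) (h x), h (hIter S.phi n x))
          ∈ T.GaN (((0:ℕ) : ℕ) : ℤ)
      rw [cSum_const, hconj n x, mul_comm n e]
      simpa using T.diag_mem_gaN_zero _
    · show Continuous fun x =>
        (hIter T.phi (cSum S.phi (fun _ => e) n x) (h x), h (hIter S.phi n x))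
      simp only [cSum_const]
      exact ((continuous_hIter _ _).comp h.continuous).prodMk
        (h.continuous.comp (continuous_hIter _ _))
  · -- xi₂_cont
    intro n
    apply continuous_ga_mk S _ 0
    · intro y
      show (hIter S.phi (cSum T.phi (fun _ => e) n y) (h.symm y), h.symm (hIter T.phi n y))
          ∈ S.GaN (((0:ℕ) : ℕ) : ℤ)
      rw [cSum_const, hconj' n y, mul_comm n e]
      simpa using S.diag_mem_gaN_zero _
    · show Continuous fun y =>
        (hIter S.phi (cSum T.phi (fun _ => e) n y) (h.symm y), h.symm (hIter T.phi n y))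
      simp only [cSum_const]
      exact ((continuous_hIter _ _).comp h.symm.continuous).prodMk
        (h.symm.continuous.comp (continuous_hIter _ _))
  · -- eta₁_cont
    apply continuous_ga_dom
    intro n
    obtain ⟨m, hm⟩ := hkey n
    apply continuous_ga_mk T _ m
    · rintro ⟨p, hp⟩
      show (hIter T.phi 0 (h p.1), h p.2) ∈ T.GaN (m : ℤ)
      rw [hIter_zero]
      exact hm p hp
    · show Continuous fun q : ↥(S.GaN ((n:ℕ) : ℤ)) =>
        (hIter T.phi 0 (h (q : X × X).1), h (q : X × X).2)
      exact ((continuous_hIter _ _).comp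
          (h.continuous.comp (continuous_fst.comp continuous_subtype_val))).prodMk
        (h.continuous.comp (continuous_snd.comp continuous_subtype_val))
  · -- eta₂_cont
    apply continuous_ga_dom
    intro n
    obtain ⟨m, hm⟩ := hkey' n
    apply continuous_ga_mk S _ m
    · rintro ⟨p, hp⟩
      show (hIter S.phi 0 (h.symm p.1), h.symm p.2) ∈ S.GaN (m : ℤ)
      rw [hIter_zero]
      exact hm p hp
    · show Continuous fun q : ↥(T.GaN ((n:ℕ) : ℤ)) =>
        (hIter S.phi 0 (h.symm (q : Y × Y).1), h.symm (q : Y × Y).2)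
      exact ((continuous_hIter _ _).comp
          (h.symm.continuous.comp (continuous_fst.comp continuous_subtype_val))).prodMk
        (h.symm.continuous.comp (continuous_snd.comp continuous_subtype_val))

end SmaleSpace

/-- If Smale spaces `(X,φ)` and `(Y,ψ)` are flip conjugate, then they are
asymptotically continuous orbit equivalent. -/
theorem flipConjugate_implies_ACOE {X Y : Type*} [MetricSpace X] [CompactSpace X]
    [MetricSpace Y] [CompactSpace Y] (S : SmaleSpace X) (T : SmaleSpace Y)
    (hflip : SmaleSpace.FlipConjugate S T) :
    SmaleSpace.ACOE S T := by
  obtain ⟨h, hcase⟩ := hflip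
  rcases hcase with hc | hc
  · -- genuine conjugacy
    have hc_symm : ∀ y, h.symm (T.phi y) = S.phi (h.symm y) := by
      intro y
      apply h.injective
      rw [h.apply_symm_apply, hc, h.apply_symm_apply]
    refine ⟨SmaleSpace.acoe_mk S T h 1 (by norm_num) ?_ ?_ ?_⟩
    · intro j x
      rw [one_mul]
      exact SmaleSpace.conj_hIter hc j x
    · exact SmaleSpace.key S T h hc
    · exact SmaleSpace.key T S h.symm hc_symm
  · -- flip conjugacy : `h` conjugates `S` and `T.rev`
    have hcr : ∀ x, h (S.phi x) = T.rev.phi (h x) := hc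
    have hcs : ∀ y, h.symm (T.rev.phi y) = S.phi (h.symm y) := by
      intro y
      apply h.injective
      rw [h.apply_symm_apply, hc, h.apply_symm_apply]
      exact (T.phi.symm.apply_symm_apply y).symm ▸ rfl
    refine ⟨SmaleSpace.acoe_mk S T h (-1) (by norm_num) ?_ ?_ ?_⟩
    · intro j x
      have := SmaleSpace.conj_hIter hcr j x
      rw [SmaleSpace.rev_phi, SmaleSpace.hIter_symm] at this
      rw [this, neg_one_mul]
    · intro n
      obtain ⟨m, hm⟩ := SmaleSpace.key S T.rev h hcr n
      refine ⟨m, fun p hp => ?_⟩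
      rw [← SmaleSpace.rev_gaN]
      exact hm p hp
    · intro n
      obtain ⟨m, hm⟩ := SmaleSpace.key T.rev S h.symm hcs n
      refine ⟨m, fun p hp => ?_⟩
      exact hm p (by rwa [SmaleSpace.rev_gaN])
end
end

section
/- Let A and B be irreducible non-permutation square matrices with entries in {0,1}. The two-sided topological Markov shifts (X̄_A, σ̄_A) and (X̄_B, σ̄_B) are flip conjugate if and only if they are asymptotically flip conjugate. -/
open Filter Set Topology

noncomputable section

/-- The two-sided shift space of a 0-1 matrix `A`. -/
def MarkovShift {N : ℕ} (A : Matrix (Fin N) (Fin N) ℕ) : Type :=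
  {x : ℤ → Fin N // ∀ i : ℤ, A (x i) (x (i + 1)) = 1}

/-- The underlying bi-infinite sequence of a point of the shift space. -/
def MarkovShift.seq {N : ℕ} {A : Matrix (Fin N) (Fin N) ℕ} (x : MarkovShift A) :
    ℤ → Fin N := Subtype.val x


/- ======================= Auxiliary development ======================= -/

section HIterLemmas

variable {X : Type*} [TopologicalSpace X]

theorem hIter_zero (φ : X ≃ₜ X) (x : X) : hIter φ 0 x = x := by
  simp [hIter]

theorem hIter_one (φ : X ≃ₜ X) (x : X) : hIter φ 1 x = φ x := by
  simp [hIter]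

theorem hIter_neg_one (φ : X ≃ₜ X) (x : X) : hIter φ (-1) x = φ.symm x := by
  simp [hIter]

theorem hIter_add (φ : X ≃ₜ X) (a b : ℤ) (x : X) :
    hIter φ (a + b) x = hIter φ a (hIter φ b x) := by
  simp [hIter, zpow_add, Equiv.Perm.mul_apply]

theorem hIter_continuous (φ : X ≃ₜ X) (n : ℤ) : Continuous (hIter φ n) := by
  induction n using Int.induction_on with
  | zero => exact continuous_id.congr fun x => (hIter_zero φ x).symm
  | succ k ih =>
      have e : ∀ x, hIter φ ((k : ℤ) + 1) x = φ (hIter φ k x) := by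
        intro x; rw [add_comm, hIter_add, hIter_one]
      exact (φ.continuous.comp ih).congr fun x => (e x).symm
  | pred k ih =>
      have e : ∀ x, hIter φ (-(k : ℤ) - 1) x = φ.symm (hIter φ (-k) x) := by
        intro x
        rw [show -(k : ℤ) - 1 = (-1) + (-k) by ring, hIter_add, hIter_neg_one]
      exact (φ.symm.continuous.comp ih).congr fun x => (e x).symm

theorem cSum_const (φ : X ≃ₜ X) (c : ℤ) (n : ℤ) (x : X) :
    cSum φ (fun _ => c) n x = n * c := by
  unfold cSum
  split_ifs with h
  · simp [Finset.sum_const, Int.toNat_of_nonneg h]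
  · push_neg at h
    simp [Finset.sum_const, Int.toNat_of_nonneg (by omega : (0:ℤ) ≤ -n)]

end HIterLemmas

theorem MarkovShift.ext_seq {N : ℕ} {A : Matrix (Fin N) (Fin N) ℕ} {x z : MarkovShift A}
    (h : ∀ i, x.seq i = z.seq i) : x = z := Subtype.ext (funext h)

theorem MarkovShift.prop_seq {N : ℕ} {A : Matrix (Fin N) (Fin N) ℕ} (x : MarkovShift A)
    (i : ℤ) : A (x.seq i) (x.seq (i + 1)) = 1 := x.2 i

/-- Bundle of the standing hypotheses on a Markov-shift Smale space. -/
structure Good {N : ℕ} (A : Matrix (Fin N) (Fin N) ℕ) (lam₀ : ℝ)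
    [MetricSpace (MarkovShift A)] [CompactSpace (MarkovShift A)]
    (S : SmaleSpace (MarkovShift A)) : Prop where
  lam_pos : 0 < lam₀
  lam_lt : lam₀ < 1
  hd : ∀ x z : MarkovShift A, x ≠ z →
    dist x z = lam₀ ^ sInf {k : ℕ | ∃ i : ℤ, i.natAbs = k ∧ x.seq i ≠ z.seq i}
  hphi : ∀ (x : MarkovShift A) (i : ℤ), (S.phi x).seq i = x.seq (i + 1)
  heps : S.eps = lam₀
  hbr : ∀ x z : MarkovShift A, dist x z < lam₀ → ∀ i : ℤ,
    (S.br x z).seq i = if i ≤ 0 then x.seq i else z.seq i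

namespace Good

variable {N : ℕ} {A : Matrix (Fin N) (Fin N) ℕ} [MetricSpace (MarkovShift A)]
  [CompactSpace (MarkovShift A)] {lam₀ : ℝ} {S : SmaleSpace (MarkovShift A)}

theorem hphi_symm (hS : Good A lam₀ S) (x : MarkovShift A) (i : ℤ) :
    (S.phi.symm x).seq i = x.seq (i + (-1)) := by
  have h1 := hS.hphi (S.phi.symm x) (i + (-1))
  rw [S.phi.apply_symm_apply] at h1
  rw [show i + -1 + 1 = i by ring] at h1
  exact h1.symm

theorem seq_hIter (hS : Good A lam₀ S) : ∀ (n : ℤ) (x : MarkovShift A) (i : ℤ),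
    (hIter S.phi n x).seq i = x.seq (i + n) := by
  intro n
  induction n using Int.induction_on with
  | zero => intro x i; rw [hIter_zero]; norm_num
  | succ k ih =>
      intro x i
      rw [add_comm ((k : ℤ)) 1, hIter_add, hIter_one, hS.hphi, ih]
      congr 1; ring
  | pred k ih =>
      intro x i
      rw [show -(k : ℤ) - 1 = (-1) + (-k) by ring, hIter_add, hIter_neg_one,
        hS.hphi_symm, ih]
      congr 1; ring

theorem seq_eq_of_dist_lt (hS : Good A lam₀ S) {x z : MarkovShift A} {k : ℕ}
    (h : dist x z < lam₀ ^ k) : ∀ i : ℤ, i.natAbs ≤ k → x.seq i = z.seq i := by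
  intro i hi
  by_contra hne
  have hxz : x ≠ z := fun e => hne (by rw [e])
  rw [hS.hd x z hxz] at h
  have h1 : sInf {k : ℕ | ∃ i : ℤ, i.natAbs = k ∧ x.seq i ≠ z.seq i} ≤ i.natAbs :=
    Nat.sInf_le ⟨i, rfl, hne⟩
  have h2 : k < sInf {k : ℕ | ∃ i : ℤ, i.natAbs = k ∧ x.seq i ≠ z.seq i} :=
    (pow_lt_pow_iff_right_of_lt_one₀ hS.lam_pos hS.lam_lt).mp h
  omega

theorem dist_le_pow (hS : Good A lam₀ S) {x z : MarkovShift A} {k : ℕ}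
    (h : ∀ i : ℤ, i.natAbs ≤ k → x.seq i = z.seq i) : dist x z ≤ lam₀ ^ (k + 1) := by
  rcases eq_or_ne x z with rfl | hne
  · rw [dist_self]; exact pow_nonneg hS.lam_pos.le _
  · rw [hS.hd x z hne]
    apply pow_le_pow_of_le_one (le_of_lt hS.lam_pos) (le_of_lt hS.lam_lt)
    have hne' : ∃ i : ℤ, x.seq i ≠ z.seq i := by
      by_contra hc
      push_neg at hc
      exact hne (MarkovShift.ext_seq hc)
    obtain ⟨i0, hi0⟩ := hne'
    have hNE : {k : ℕ | ∃ i : ℤ, i.natAbs = k ∧ x.seq i ≠ z.seq i}.Nonempty :=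
      ⟨i0.natAbs, i0, rfl, hi0⟩
    obtain ⟨j, hj, hjne⟩ := Nat.sInf_mem hNE
    by_contra hc
    push_neg at hc
    exact hjne (h j (by omega))

theorem isOpen_coord (hS : Good A lam₀ S) (i : ℤ) (v : Fin N) :
    IsOpen {x : MarkovShift A | x.seq i = v} := by
  rw [Metric.isOpen_iff]
  intro x hx
  refine ⟨lam₀ ^ i.natAbs, pow_pos hS.lam_pos _, fun z hz => ?_⟩
  have := hS.seq_eq_of_dist_lt (x := z) (z := x) (k := i.natAbs)
    (by rwa [Metric.mem_ball] at hz) i le_rfl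
  rw [Set.mem_setOf_eq, this]
  exact hx

theorem isOpen_agree (hS : Good A lam₀ S) (i : ℤ) :
    IsOpen {p : MarkovShift A × MarkovShift A | p.1.seq i = p.2.seq i} := by
  have : {p : MarkovShift A × MarkovShift A | p.1.seq i = p.2.seq i}
      = ⋃ v : Fin N, {x : MarkovShift A | x.seq i = v} ×ˢ {x : MarkovShift A | x.seq i = v} := by
    ext p
    simp only [Set.mem_setOf_eq, Set.mem_iUnion, Set.mem_prod]
    exact ⟨fun h => ⟨p.2.seq i, h, rfl⟩, fun ⟨v, h1, h2⟩ => h1.trans h2.symm⟩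
  rw [this]
  exact isOpen_iUnion fun v => (hS.isOpen_coord i v).prod (hS.isOpen_coord i v)

end Good


namespace Good

variable {N : ℕ} {A : Matrix (Fin N) (Fin N) ℕ} [MetricSpace (MarkovShift A)]
  [CompactSpace (MarkovShift A)] {lam₀ : ℝ} {S : SmaleSpace (MarkovShift A)}

theorem gs0_iff (hS : Good A lam₀ S) (x z : MarkovShift A) :
    (x, z) ∈ S.Gs0 ↔ ∀ i : ℤ, -1 ≤ i → x.seq i = z.seq i := by
  simp only [SmaleSpace.Gs0, SmaleSpace.Xs, Set.mem_setOf_eq]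
  constructor
  · rintro ⟨hbr, hdist⟩
    rw [hS.heps] at hdist
    have hdist' : dist x z < lam₀ ^ 1 := by rwa [pow_one]
    have hag := hS.seq_eq_of_dist_lt hdist'
    intro i hi
    rcases le_or_gt i 0 with h0 | h0
    · exact hag i (by omega)
    · have h2 := congrArg (fun w : MarkovShift A => w.seq i) hbr
      rw [hS.hbr z x (by rwa [dist_comm]) i, if_neg (by omega)] at h2
      exact h2
  · intro hag
    have h11 : ∀ i : ℤ, i.natAbs ≤ 1 → x.seq i = z.seq i := fun i hi => hag i (by omega)
    have hd2 : dist x z ≤ lam₀ ^ 2 := hS.dist_le_pow h11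
    have hdlt : dist x z < lam₀ := lt_of_le_of_lt hd2
      (by nlinarith [hS.lam_pos, hS.lam_lt])
    refine ⟨?_, by rw [hS.heps]; exact hdlt⟩
    apply MarkovShift.ext_seq
    intro i
    rw [hS.hbr z x (by rwa [dist_comm]) i]
    split_ifs with h0
    · rfl
    · exact hag i (by omega)

theorem gu0_iff (hS : Good A lam₀ S) (x z : MarkovShift A) :
    (x, z) ∈ S.Gu0 ↔ ∀ i : ℤ, i ≤ 1 → x.seq i = z.seq i := by
  simp only [SmaleSpace.Gu0, SmaleSpace.Xu, Set.mem_setOf_eq]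
  constructor
  · rintro ⟨hbr, hdist⟩
    rw [hS.heps] at hdist
    have hdist' : dist x z < lam₀ ^ 1 := by rwa [pow_one]
    have hag := hS.seq_eq_of_dist_lt hdist'
    intro i hi
    rcases le_or_gt i 0 with h0 | h0
    · have h2 := congrArg (fun w : MarkovShift A => w.seq i) hbr
      rw [hS.hbr x z hdist i, if_pos h0] at h2
      exact h2
    · exact hag i (by omega)
  · intro hag
    have h11 : ∀ i : ℤ, i.natAbs ≤ 1 → x.seq i = z.seq i := fun i hi => hag i (by omega)
    have hd2 : dist x z ≤ lam₀ ^ 2 := hS.dist_le_pow h11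
    have hdlt : dist x z < lam₀ := lt_of_le_of_lt hd2
      (by nlinarith [hS.lam_pos, hS.lam_lt])
    refine ⟨?_, by rw [hS.heps]; exact hdlt⟩
    apply MarkovShift.ext_seq
    intro i
    rw [hS.hbr x z hdlt i]
    split_ifs with h0
    · exact hag i (by omega)
    · rfl

theorem gaN_iff (hS : Good A lam₀ S) (n : ℤ) (x z : MarkovShift A) :
    (x, z) ∈ S.GaN n ↔ ∀ i : ℤ, (n - 1 ≤ i ∨ i ≤ 1 - n) → x.seq i = z.seq i := by
  simp only [SmaleSpace.GaN, SmaleSpace.GsN, SmaleSpace.GuN, Set.mem_inter_iff,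
    Set.mem_setOf_eq]
  rw [hS.gs0_iff, hS.gu0_iff]
  constructor
  · rintro ⟨h1, h2⟩ i hi
    rcases hi with hi | hi
    · have := h1 (i - n) (by omega)
      rwa [hS.seq_hIter, hS.seq_hIter, show i - n + n = i by ring] at this
    · have := h2 (i + n) (by omega)
      rwa [hS.seq_hIter, hS.seq_hIter, show i + n + -n = i by ring] at this
  · intro h
    constructor
    · intro i hi
      rw [hS.seq_hIter, hS.seq_hIter]
      exact h (i + n) (Or.inl (by omega))
    · intro i hi
      rw [hS.seq_hIter, hS.seq_hIter]
      exact h (i + -n) (Or.inr (by omega))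

theorem gaN_mono (hS : Good A lam₀ S) {n n' : ℤ} (h : n ≤ n') :
    S.GaN n ⊆ S.GaN n' := by
  rintro ⟨x, z⟩ hp
  rw [hS.gaN_iff] at hp ⊢
  intro i hi
  exact hp i (by omega)

theorem diag_mem_gaN (hS : Good A lam₀ S) (n : ℤ) (x : MarkovShift A) :
    (x, x) ∈ S.GaN n := (hS.gaN_iff n x x).mpr fun _ _ => rfl

theorem diag_mem_ga (hS : Good A lam₀ S) (x : MarkovShift A) : (x, x) ∈ S.Ga :=
  S.gaN_subset_ga 0 (hS.diag_mem_gaN 0 x)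

theorem mem_ga_iff (hS : Good A lam₀ S) (x z : MarkovShift A) :
    (x, z) ∈ S.Ga ↔ ∃ n : ℕ, ∀ i : ℤ, ((n : ℤ) - 1 ≤ i ∨ i ≤ 1 - (n : ℤ)) →
      x.seq i = z.seq i := by
  have : (x, z) ∈ S.Ga ↔ ∃ n : ℕ, (x, z) ∈ S.GaN n := by
    simp only [SmaleSpace.Ga, Set.mem_iUnion]
  rw [this]
  exact exists_congr fun n => hS.gaN_iff n x z

end Good

theorem cont_into_ga {X : Type*} [MetricSpace X] [CompactSpace X] (S : SmaleSpace X)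
    {Z : Type*} [TopologicalSpace Z] (m : ℕ) (f : Z → X × X) (hf : Continuous f)
    (hm : ∀ z, f z ∈ S.GaN m) (hg : ∀ z, f z ∈ S.Ga) :
    @Continuous _ _ _ S.gaTopology (fun z => (⟨f z, hg z⟩ : ↥S.Ga)) := by
  have h1 : @Continuous (↥(S.GaN ((m : ℕ) : ℤ))) (↥S.Ga) _ S.gaTopology
      (Set.inclusion (S.gaN_subset_ga m)) := by
    rw [continuous_iff_coinduced_le]
    exact le_iSup (fun n : ℕ => TopologicalSpace.coinduced
      (Set.inclusion (S.gaN_subset_ga n)) inferInstance) m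
  exact @Continuous.comp Z (↥(S.GaN ((m : ℕ) : ℤ))) (↥S.Ga) _ _ S.gaTopology _ _
    h1 (hf.subtype_mk hm)

theorem Good.uniformize {N : ℕ} {A : Matrix (Fin N) (Fin N) ℕ}
    [MetricSpace (MarkovShift A)] [CompactSpace (MarkovShift A)] {lam₀ : ℝ}
    {S : SmaleSpace (MarkovShift A)} (hS : Good A lam₀ S)
    {Z : Type*} [TopologicalSpace Z] [CompactSpace Z]
    (f : Z → ↥S.Ga) (hf : @Continuous _ _ _ S.gaTopology f) :
    ∃ m : ℕ, ∀ z, (f z : MarkovShift A × MarkovShift A) ∈ S.GaN m := by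
  have hopen : ∀ m : ℕ, IsOpen[S.gaTopology]
      {q : ↥S.Ga | (q : MarkovShift A × MarkovShift A) ∈ S.GaN m} := by
    intro m
    have hdef : S.gaTopology = ⨆ n : ℕ, TopologicalSpace.coinduced
        (Set.inclusion (S.gaN_subset_ga n)) inferInstance := rfl
    rw [hdef, isOpen_iSup_iff]
    intro n
    rw [isOpen_coinduced]
    have hset : (Set.inclusion (S.gaN_subset_ga n)) ⁻¹'
        {q : ↥S.Ga | (q : MarkovShift A × MarkovShift A) ∈ S.GaN m}
        = Subtype.val ⁻¹' (⋂ i ∈ Finset.Icc (-(n : ℤ)) (n : ℤ),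
            {p : MarkovShift A × MarkovShift A |
              ((m : ℤ) - 1 ≤ i ∨ i ≤ 1 - (m : ℤ)) → p.1.seq i = p.2.seq i}) := by
      ext q
      obtain ⟨⟨x, z⟩, hp⟩ := q
      simp only [Set.mem_preimage, Set.inclusion, Set.mem_setOf_eq, Set.mem_iInter]
      rw [hS.gaN_iff]
      constructor
      · intro h i _ hcond
        exact h i hcond
      · intro h i hcond
        by_cases hin : i ∈ Finset.Icc (-(n : ℤ)) (n : ℤ)
        · exact h i hin hcond
        · refine (hS.gaN_iff (n : ℤ) x z).mp hp i ?_
          simp only [Finset.mem_Icc] at hin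
          omega
    rw [hset]
    refine (isOpen_biInter_finset fun i _ => ?_).preimage continuous_subtype_val
    by_cases hcond : ((m : ℤ) - 1 ≤ i ∨ i ≤ 1 - (m : ℤ))
    · have he : {p : MarkovShift A × MarkovShift A |
          ((m : ℤ) - 1 ≤ i ∨ i ≤ 1 - (m : ℤ)) → p.1.seq i = p.2.seq i}
          = {p : MarkovShift A × MarkovShift A | p.1.seq i = p.2.seq i} := by
        ext p
        simp only [Set.mem_setOf_eq]
        exact ⟨fun h => h hcond, fun h _ => h⟩
      rw [he]; exact hS.isOpen_agree i
    · have he : {p : MarkovShift A × MarkovShift A |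
          ((m : ℤ) - 1 ≤ i ∨ i ≤ 1 - (m : ℤ)) → p.1.seq i = p.2.seq i} = Set.univ := by
        ext p
        simp only [Set.mem_setOf_eq, Set.mem_univ, iff_true]
        exact fun hc => absurd hc hcond
      rw [he]; exact isOpen_univ
  have hcover : (Set.univ : Set Z) ⊆ ⋃ m : ℕ,
      f ⁻¹' {q : ↥S.Ga | (q : MarkovShift A × MarkovShift A) ∈ S.GaN m} := by
    intro z _
    have hz : (f z : MarkovShift A × MarkovShift A) ∈ ⋃ n : ℕ, S.GaN n := (f z).2
    obtain ⟨n, hn⟩ := Set.mem_iUnion.mp hz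
    exact Set.mem_iUnion.mpr ⟨n, hn⟩
  obtain ⟨s, hs⟩ := isCompact_univ.elim_finite_subcover _
    (fun m => @Continuous.isOpen_preimage Z (↥S.Ga) _ S.gaTopology f hf _ (hopen m))
    hcover
  refine ⟨s.sup id, fun z => ?_⟩
  obtain ⟨m, hms, hzm⟩ := Set.mem_iUnion₂.mp (hs (Set.mem_univ z))
  exact hS.gaN_mono (by exact_mod_cast (Finset.le_sup (f := id) hms : m ≤ s.sup id)) hzm


/-- Helper: sign condition arithmetic. -/
theorem cond_of_le {b : ℤ} (hb : b = 1 ∨ b = -1) {m : ℕ} {i : ℤ} {n : ℕ}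
    (h : m + i.natAbs ≤ n) : (m : ℤ) ≤ |i - b * ((n : ℤ) + 1)| := by
  rcases hb with rfl | rfl
  · rw [Int.abs_eq_natAbs]; omega
  · rw [Int.abs_eq_natAbs]; omega

theorem cond_of_neg {b : ℤ} (hb : b = 1 ∨ b = -1) {m : ℕ} {i : ℤ} {n : ℕ}
    (h : b * i ≤ -(m : ℤ)) : (m : ℤ) ≤ |i - b * ((n : ℤ) + 1)| := by
  rcases hb with rfl | rfl
  · rw [Int.abs_eq_natAbs]; omega
  · rw [Int.abs_eq_natAbs]; omega

/-- Template data for constructing an exact intertwiner from an asymptotically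
commuting continuous map. -/
structure TData {N' M' : ℕ} (A : Matrix (Fin N') (Fin N') ℕ) (B : Matrix (Fin M') (Fin M') ℕ)
    [MetricSpace (MarkovShift A)] [MetricSpace (MarkovShift B)] where
  g : MarkovShift A → MarkovShift B
  hg : Continuous g
  F : MarkovShift A ≃ₜ MarkovShift A
  b : ℤ
  hb : b = 1 ∨ b = -1
  m : ℕ
  H : ∀ (x : MarkovShift A) (j : ℤ), (m : ℤ) ≤ |j| → (g (F x)).seq j = (g x).seq (j + b)

namespace TData

variable {N' M' : ℕ} {A : Matrix (Fin N') (Fin N') ℕ} {B : Matrix (Fin M') (Fin M') ℕ}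
  [MetricSpace (MarkovShift A)] [MetricSpace (MarkovShift B)]
  (D : TData A B)

/-- The approximating coordinate sequences. -/
def kseq (x : MarkovShift A) (n : ℕ) (i : ℤ) : Fin M' :=
  (D.g (hIter D.F n x)).seq (i - D.b * n)

theorem kseq_succ' (x : MarkovShift A) (i : ℤ) (n : ℕ)
    (hcond : (D.m : ℤ) ≤ |i - D.b * ((n : ℤ) + 1)|) :
    D.kseq x (n + 1) i = D.kseq x n i := by
  have h1 : hIter D.F (((n + 1 : ℕ) : ℤ)) x = D.F (hIter D.F n x) := by
    push_cast
    rw [add_comm ((n : ℤ)) 1, hIter_add, hIter_one]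
  show (D.g (hIter D.F (((n+1:ℕ)) : ℤ) x)).seq (i - D.b * ((n+1:ℕ) : ℤ)) = _
  rw [h1, show (((n+1:ℕ)):ℤ) = (n:ℤ)+1 by push_cast; ring,
    D.H (hIter D.F n x) _ hcond]
  show _ = (D.g (hIter D.F ((n:ℕ) : ℤ) x)).seq (i - D.b * ((n:ℕ) : ℤ))
  congr 1
  ring

theorem kseq_stab (x : MarkovShift A) (i : ℤ) {n n' : ℕ}
    (h : D.m + i.natAbs ≤ n) (h' : n ≤ n') : D.kseq x n' i = D.kseq x n i := by
  induction n', h' using Nat.le_induction with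
  | base => rfl
  | succ k hk ih =>
      rw [D.kseq_succ' x i k (cond_of_le D.hb (le_trans h hk)), ih]

/-- The intertwining map. -/
def K (x : MarkovShift A) : MarkovShift B :=
  ⟨fun i => D.kseq x (D.m + i.natAbs) i, by
    intro i
    show B (D.kseq x (D.m + i.natAbs) i) (D.kseq x (D.m + (i+1).natAbs) (i+1)) = 1
    have e1 : D.kseq x (D.m + i.natAbs) i
        = D.kseq x (D.m + i.natAbs + (i+1).natAbs + 1) i :=
      (D.kseq_stab x i (by omega) (by omega)).symm
    have e2 : D.kseq x (D.m + (i+1).natAbs) (i+1)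
        = D.kseq x (D.m + i.natAbs + (i+1).natAbs + 1) (i+1) :=
      (D.kseq_stab x (i+1) (by omega) (by omega)).symm
    rw [e1, e2]
    show B ((D.g (hIter D.F ((D.m + i.natAbs + (i+1).natAbs + 1 : ℕ) : ℤ) x)).seq
        (i - D.b * ((D.m + i.natAbs + (i+1).natAbs + 1 : ℕ) : ℤ))) _ = 1
    have e3 : i + 1 - D.b * ((D.m + i.natAbs + (i+1).natAbs + 1 : ℕ) : ℤ)
        = (i - D.b * ((D.m + i.natAbs + (i+1).natAbs + 1 : ℕ) : ℤ)) + 1 := by ring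
    show B _ ((D.g (hIter D.F ((D.m + i.natAbs + (i+1).natAbs + 1 : ℕ) : ℤ) x)).seq
        (i + 1 - D.b * ((D.m + i.natAbs + (i+1).natAbs + 1 : ℕ) : ℤ))) = 1
    rw [e3]
    exact MarkovShift.prop_seq _ _⟩

theorem K_seq (x : MarkovShift A) (i : ℤ) {n : ℕ} (h : D.m + i.natAbs ≤ n) :
    (D.K x).seq i = D.kseq x n i := by
  show D.kseq x (D.m + i.natAbs) i = D.kseq x n i
  exact (D.kseq_stab x i le_rfl h).symm

theorem K_step (x : MarkovShift A) (i : ℤ) :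
    (D.K (D.F x)).seq i = (D.K x).seq (i + D.b) := by
  rw [D.K_seq (D.F x) i (le_refl (D.m + i.natAbs)),
    D.K_seq x (i + D.b) (n := D.m + i.natAbs + 1)
      (by rcases D.hb with h | h <;> rw [h] <;> omega)]
  show (D.g (hIter D.F ((D.m + i.natAbs : ℕ) : ℤ) (D.F x))).seq
      (i - D.b * ((D.m + i.natAbs : ℕ) : ℤ))
    = (D.g (hIter D.F ((D.m + i.natAbs + 1 : ℕ) : ℤ) x)).seq
      (i + D.b - D.b * ((D.m + i.natAbs + 1 : ℕ) : ℤ))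
  have h1 : hIter D.F ((D.m + i.natAbs + 1 : ℕ) : ℤ) x
      = hIter D.F ((D.m + i.natAbs : ℕ) : ℤ) (D.F x) := by
    push_cast
    rw [hIter_add, hIter_one]
  rw [h1]
  congr 1
  push_cast
  ring

theorem K_step_symm (x : MarkovShift A) (i : ℤ) :
    (D.K (D.F.symm x)).seq i = (D.K x).seq (i - D.b) := by
  have h := D.K_step (D.F.symm x) (i - D.b)
  rw [D.F.apply_symm_apply, show i - D.b + D.b = i by ring] at h
  exact h.symm

theorem K_hIter : ∀ (k : ℤ) (x : MarkovShift A) (i : ℤ),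
    (D.K (hIter D.F k x)).seq i = (D.K x).seq (i + D.b * k) := by
  intro k
  induction k using Int.induction_on with
  | zero => intro x i; rw [hIter_zero]; norm_num
  | succ k ih =>
      intro x i
      rw [show ((k : ℤ) + 1) = 1 + k by ring, hIter_add, hIter_one, D.K_step, ih]
      congr 1; ring
  | pred k ih =>
      intro x i
      rw [show (-(k : ℤ) - 1) = (-1) + (-k) by ring, hIter_add, hIter_neg_one,
        D.K_step_symm, ih]
      congr 1; ring

theorem K_left (x : MarkovShift A) (i : ℤ) (h : D.b * i ≤ -(D.m : ℤ)) :
    (D.K x).seq i = (D.g x).seq i := by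
  have hall : ∀ n : ℕ, D.kseq x n i = (D.g x).seq i := by
    intro n
    induction n with
    | zero =>
        show (D.g (hIter D.F ((0:ℕ) : ℤ) x)).seq (i - D.b * ((0:ℕ) : ℤ)) = _
        norm_num [hIter_zero]
    | succ n ih => rw [D.kseq_succ' x i n (cond_of_neg D.hb h), ih]
  show D.kseq x (D.m + i.natAbs) i = _
  exact hall _

theorem K_cont {lam₀ : ℝ} [CompactSpace (MarkovShift B)]
    {T : SmaleSpace (MarkovShift B)} (hT : Good B lam₀ T) : Continuous D.K := by
  rw [continuous_iff_continuousAt]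
  intro x
  rw [Metric.continuousAt_iff]
  intro ε hε
  obtain ⟨k, hk⟩ := exists_pow_lt_of_lt_one hε hT.lam_lt
  have hopen : IsOpen {x' : MarkovShift A | ∀ j ∈ Finset.Icc (-(k:ℤ)) (k:ℤ),
      (D.K x').seq j = (D.K x).seq j} := by
    have hrw : {x' : MarkovShift A | ∀ j ∈ Finset.Icc (-(k:ℤ)) (k:ℤ),
        (D.K x').seq j = (D.K x).seq j}
        = ⋂ j ∈ Finset.Icc (-(k:ℤ)) (k:ℤ),
          {x' : MarkovShift A | (D.K x').seq j = (D.K x).seq j} := by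
      ext x'; simp
    rw [hrw]
    refine isOpen_biInter_finset fun j _ => ?_
    have he : {x' : MarkovShift A | (D.K x').seq j = (D.K x).seq j} =
        (fun x' : MarkovShift A => D.g (hIter D.F ((D.m + j.natAbs : ℕ) : ℤ) x')) ⁻¹'
          {w : MarkovShift B | w.seq (j - D.b * ((D.m + j.natAbs : ℕ) : ℤ))
            = (D.K x).seq j} := by
      ext x'
      simp only [Set.mem_setOf_eq, Set.mem_preimage]
      rw [D.K_seq x' j le_rfl]
      exact Iff.rfl
    rw [he]
    exact (hT.isOpen_coord _ _).preimage (D.hg.comp (hIter_continuous D.F _))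
  obtain ⟨δ, hδpos, hδ⟩ := Metric.isOpen_iff.mp hopen x (fun j _ => rfl)
  refine ⟨δ, hδpos, ?_⟩
  intro x' hx'
  have hx'' := hδ (Metric.mem_ball.mpr hx')
  have hagree : ∀ j : ℤ, j.natAbs ≤ k → (D.K x').seq j = (D.K x).seq j := fun j hj =>
    hx'' j (by simp only [Finset.mem_Icc]; omega)
  calc dist (D.K x') (D.K x) ≤ lam₀ ^ (k+1) := hT.dist_le_pow hagree
    _ ≤ lam₀ ^ k := pow_le_pow_of_le_one hT.lam_pos.le hT.lam_lt.le (by omega)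
    _ < ε := hk

end TData

theorem seq_hIter_of_action {N' : ℕ} {A : Matrix (Fin N') (Fin N') ℕ}
    [MetricSpace (MarkovShift A)] (F : MarkovShift A ≃ₜ MarkovShift A) (a : ℤ)
    (ha : ∀ (x : MarkovShift A) (i : ℤ), (F x).seq i = x.seq (i + a)) :
    ∀ (c : ℤ) (x : MarkovShift A) (i : ℤ), (hIter F c x).seq i = x.seq (i + a * c) := by
  have hsymm : ∀ (x : MarkovShift A) (i : ℤ), (F.symm x).seq i = x.seq (i - a) := by
    intro x i
    have h1 := ha (F.symm x) (i - a)
    rw [F.apply_symm_apply, show i - a + a = i by ring] at h1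
    exact h1.symm
  intro c
  induction c using Int.induction_on with
  | zero => intro x i; rw [hIter_zero]; norm_num
  | succ k ih =>
      intro x i
      rw [show ((k : ℤ) + 1) = 1 + k by ring, hIter_add, hIter_one, ha, ih]
      congr 1; ring
  | pred k ih =>
      intro x i
      rw [show (-(k : ℤ) - 1) = (-1) + (-k) by ring, hIter_add, hIter_neg_one, hsymm, ih]
      congr 1; ring

theorem exists_delta {N₁ N₂ : ℕ} {A : Matrix (Fin N₁) (Fin N₁) ℕ}
    {B : Matrix (Fin N₂) (Fin N₂) ℕ}
    [MetricSpace (MarkovShift A)]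
    [MetricSpace (MarkovShift B)] [CompactSpace (MarkovShift B)]
    {lam₀ : ℝ} [CompactSpace (MarkovShift A)] {S : SmaleSpace (MarkovShift A)}
    (hS : Good A lam₀ S)
    {f : MarkovShift B → MarkovShift A} (hf : Continuous f) (i : ℤ) :
    ∃ δ > 0, ∀ w w' : MarkovShift B, dist w w' < δ → (f w).seq i = (f w').seq i := by
  obtain ⟨δ, δpos, hδ⟩ := lebesgue_number_lemma_of_metric (s := Set.univ) isCompact_univ
    (c := fun v : Fin N₁ => f ⁻¹' {x : MarkovShift A | x.seq i = v})
    (fun v => (hS.isOpen_coord i v).preimage hf)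
    (fun w _ => Set.mem_iUnion.mpr ⟨(f w).seq i, rfl⟩)
  refine ⟨δ, δpos, fun w w' hww => ?_⟩
  obtain ⟨v, hv⟩ := hδ w (Set.mem_univ w)
  have h1 : (f w).seq i = v := hv (Metric.mem_ball_self δpos)
  have h2 : (f w').seq i = v := hv (by rwa [Metric.mem_ball, dist_comm])
  rw [h1, h2]

theorem TData.comp_id {N₁ N₂ : ℕ} {A : Matrix (Fin N₁) (Fin N₁) ℕ}
    {B : Matrix (Fin N₂) (Fin N₂) ℕ}
    [MetricSpace (MarkovShift A)] [CompactSpace (MarkovShift A)]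
    [MetricSpace (MarkovShift B)] [CompactSpace (MarkovShift B)]
    {lam₀ : ℝ} {S : SmaleSpace (MarkovShift A)} {T : SmaleSpace (MarkovShift B)}
    (hS : Good A lam₀ S) (hT : Good B lam₀ T)
    (DIn : TData A B) (DOut : TData B A)
    (aIn aOut : ℤ)
    (haIn : ∀ (x : MarkovShift A) (i : ℤ), (DIn.F x).seq i = x.seq (i + aIn))
    (haOut : ∀ (y : MarkovShift B) (i : ℤ), (DOut.F y).seq i = y.seq (i + aOut))
    (haOut1 : aOut = 1 ∨ aOut = -1)
    (hinv : ∀ x, DOut.g (DIn.g x) = x)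
    (haux : aOut * DIn.b = 1) (hbeq : aIn = DOut.b)
    (x : MarkovShift A) : DOut.K (DIn.K x) = x := by
  apply MarkovShift.ext_seq
  intro i
  obtain ⟨δ, hδpos, hδ⟩ := exists_delta hS (DOut.K_cont hS) i
  obtain ⟨k₀, hk₀⟩ := exists_pow_lt_of_lt_one hδpos hT.lam_lt
  set k := max k₀ (DOut.m + i.natAbs) with hkdef
  set n := DIn.m + k with hndef
  set w := DIn.g (hIter DIn.F ((n : ℕ) : ℤ) x) with hwdef
  set Φ := hIter T.phi (-(DIn.b * ((n : ℕ) : ℤ))) w with hPhidef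
  have hΦseq : ∀ j : ℤ, Φ.seq j = DIn.kseq x n j := by
    intro j
    rw [hPhidef, hT.seq_hIter]
    show w.seq (j + -(DIn.b * ((n : ℕ) : ℤ)))
      = (DIn.g (hIter DIn.F ((n : ℕ) : ℤ) x)).seq (j - DIn.b * ((n : ℕ) : ℤ))
    rw [← hwdef]
    congr 1
  have hagree : ∀ j : ℤ, j.natAbs ≤ k → (DIn.K x).seq j = Φ.seq j := by
    intro j hj
    rw [hΦseq, DIn.K_seq x j (by omega : DIn.m + j.natAbs ≤ n)]
  have h1 : (DOut.K (DIn.K x)).seq i = (DOut.K Φ).seq i := by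
    apply hδ
    calc dist (DIn.K x) Φ ≤ lam₀ ^ (k + 1) := hT.dist_le_pow hagree
      _ ≤ lam₀ ^ k₀ := pow_le_pow_of_le_one hT.lam_pos.le hT.lam_lt.le (by omega)
      _ < δ := hk₀
  rw [h1]
  have haOutsq : aOut * aOut = 1 := by rcases haOut1 with rfl | rfl <;> norm_num
  have hΦ2 : Φ = hIter DOut.F (aOut * -(DIn.b * ((n : ℕ) : ℤ))) w := by
    apply MarkovShift.ext_seq
    intro j
    rw [seq_hIter_of_action DOut.F aOut haOut, hPhidef, hT.seq_hIter]
    congr 1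
    rw [← mul_assoc, haOutsq, one_mul]
  rw [hΦ2, DOut.K_hIter]
  have hidx : i + DOut.b * (aOut * -(DIn.b * ((n : ℕ) : ℤ)))
      = i - DOut.b * ((n : ℕ) : ℤ) := by
    have hh : DOut.b * (aOut * -(DIn.b * ((n : ℕ) : ℤ)))
        = -(DOut.b * ((aOut * DIn.b) * ((n : ℕ) : ℤ))) := by ring
    rw [hh, haux, one_mul]
    ring
  rw [hidx]
  have hcond : DOut.b * (i - DOut.b * ((n : ℕ) : ℤ)) ≤ -(DOut.m : ℤ) := by
    have hbsq : DOut.b * DOut.b = 1 := by rcases DOut.hb with h | h <;> rw [h] <;> norm_num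
    have h2 : DOut.b * i ≤ (i.natAbs : ℤ) := by
      rcases DOut.hb with h | h <;> rw [h] <;> omega
    have h4 : DOut.m + i.natAbs ≤ n := by omega
    have h5 : ((DOut.m : ℤ)) + (i.natAbs : ℤ) ≤ ((n : ℕ) : ℤ) := by exact_mod_cast h4
    calc DOut.b * (i - DOut.b * ((n : ℕ) : ℤ))
        = DOut.b * i - (DOut.b * DOut.b) * ((n : ℕ) : ℤ) := by ring
      _ = DOut.b * i - ((n : ℕ) : ℤ) := by rw [hbsq, one_mul]
      _ ≤ -(DOut.m : ℤ) := by linarith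
  rw [DOut.K_left w _ hcond, hwdef, hinv, seq_hIter_of_action DIn.F aIn haIn]
  congr 1
  rw [hbeq]
  ring


section Conj

variable {N₁ N₂ : ℕ} {A : Matrix (Fin N₁) (Fin N₁) ℕ} {B : Matrix (Fin N₂) (Fin N₂) ℕ}
  [MetricSpace (MarkovShift A)] [CompactSpace (MarkovShift A)]
  [MetricSpace (MarkovShift B)] [CompactSpace (MarkovShift B)]
  {lam₀ : ℝ} {S : SmaleSpace (MarkovShift A)} {T : SmaleSpace (MarkovShift B)}

theorem comm_hIter (h : MarkovShift A ≃ₜ MarkovShift B) (ε : ℤ)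
    (hcomm : ∀ x, h (S.phi x) = hIter T.phi ε (h x)) :
    ∀ (k : ℤ) (x : MarkovShift A), h (hIter S.phi k x) = hIter T.phi (ε * k) (h x) := by
  have hstep_symm : ∀ x, h (S.phi.symm x) = hIter T.phi (-ε) (h x) := by
    intro x
    have h1 := hcomm (S.phi.symm x)
    rw [S.phi.apply_symm_apply] at h1
    have h2 : hIter T.phi (-ε) (h x)
        = hIter T.phi (-ε) (hIter T.phi ε (h (S.phi.symm x))) := by rw [← h1]
    rw [← hIter_add, show -ε + ε = 0 by ring, hIter_zero] at h2
    exact h2.symm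
  intro k
  induction k using Int.induction_on with
  | zero => intro x; rw [hIter_zero, mul_zero, hIter_zero]
  | succ k ih =>
      intro x
      rw [show ((k : ℤ) + 1) = 1 + k by ring, hIter_add, hIter_one, hcomm, ih,
        ← hIter_add]
      congr 1; ring
  | pred k ih =>
      intro x
      rw [show (-(k : ℤ) - 1) = (-1) + (-k) by ring, hIter_add, hIter_neg_one,
        hstep_symm, ih, ← hIter_add]
      congr 1; ring

theorem comm_symm_hIter (h : MarkovShift A ≃ₜ MarkovShift B) (ε : ℤ)
    (hε : ε = 1 ∨ ε = -1)
    (hcomm : ∀ x, h (S.phi x) = hIter T.phi ε (h x)) :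
    ∀ (k : ℤ) (y : MarkovShift B),
      h.symm (hIter T.phi k y) = hIter S.phi (ε * k) (h.symm y) := by
  intro k y
  have hsq : ε * ε = 1 := by rcases hε with rfl | rfl <;> norm_num
  have h1 := comm_hIter h ε hcomm (ε * k) (h.symm y)
  rw [h.apply_symm_apply, ← mul_assoc, hsq, one_mul] at h1
  have h2 := congrArg h.symm h1
  rw [h.symm_apply_apply] at h2
  exact h2.symm

theorem mapsGaN (hS : Good A lam₀ S) (hT : Good B lam₀ T)
    (g : MarkovShift A → MarkovShift B) (hgc : Continuous g) (ε : ℤ)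
    (hε : ε = 1 ∨ ε = -1)
    (hg : ∀ (j : ℤ) (x : MarkovShift A), (g x).seq j = (g (hIter S.phi (ε * j) x)).seq 0)
    (n : ℕ) : ∃ m : ℕ, ∀ x z : MarkovShift A,
      (x, z) ∈ S.GaN n → (g x, g z) ∈ T.GaN m := by
  have huc := Metric.uniformContinuous_iff.mp
    (CompactSpace.uniformContinuous_of_continuous hgc)
  obtain ⟨δ, hδpos, hδ⟩ := huc 1 one_pos
  obtain ⟨p, hp⟩ := exists_pow_lt_of_lt_one hδpos hS.lam_lt
  refine ⟨n + p + 2, fun x z hxz => ?_⟩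
  rw [hT.gaN_iff]
  intro j hj
  have hj' : (n : ℕ) + p + 1 ≤ j.natAbs := by push_cast at hj; omega
  rw [hg j x, hg j z]
  have hagree : ∀ i : ℤ, i.natAbs ≤ p →
      (hIter S.phi (ε * j) x).seq i = (hIter S.phi (ε * j) z).seq i := by
    intro i hi
    rw [hS.seq_hIter, hS.seq_hIter]
    refine (hS.gaN_iff (n : ℤ) x z).mp hxz (i + ε * j) ?_
    rcases hε with rfl | rfl
    · rw [one_mul]; omega
    · rw [neg_one_mul]; omega
  have hd1 : dist (hIter S.phi (ε * j) x) (hIter S.phi (ε * j) z) ≤ lam₀ ^ (p + 1) :=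
    hS.dist_le_pow hagree
  have hd2 : dist (g (hIter S.phi (ε * j) x)) (g (hIter S.phi (ε * j) z)) < 1 :=
    hδ (lt_of_le_of_lt
      (hd1.trans (pow_le_pow_of_le_one hS.lam_pos.le hS.lam_lt.le (by omega))) hp)
  exact hT.seq_eq_of_dist_lt (k := 0) (by rwa [pow_zero]) 0 le_rfl

theorem forward_data (hS : Good A lam₀ S) (hT : Good B lam₀ T)
    (h : MarkovShift A ≃ₜ MarkovShift B) (ε : ℤ) (hε : ε = 1 ∨ ε = -1)
    (hcomm : ∀ x, h (S.phi x) = hIter T.phi ε (h x)) :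
    ∃ A0 : SmaleSpace.ACOEData S T, A0.c₁ = (fun _ => ε) ∧ A0.c₂ = (fun _ => ε)
      ∧ A0.d₁ = (fun _ _ => 0) ∧ A0.d₂ = (fun _ _ => 0) := by
  have hsq : ε * ε = 1 := by rcases hε with rfl | rfl <;> norm_num
  have hci := comm_hIter (S := S) (T := T) h ε hcomm
  have hcsi := comm_symm_hIter (S := S) (T := T) h ε hε hcomm
  have hg1 : ∀ (j : ℤ) (x : MarkovShift A),
      (h x).seq j = (h (hIter S.phi (ε * j) x)).seq 0 := by
    intro j x
    rw [hci (ε * j) x, ← mul_assoc, hsq, one_mul, hT.seq_hIter]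
    norm_num
  have hg2 : ∀ (j : ℤ) (y : MarkovShift B),
      (h.symm y).seq j = (h.symm (hIter T.phi (ε * j) y)).seq 0 := by
    intro j y
    rw [hcsi (ε * j) y, ← mul_assoc, hsq, one_mul, hS.seq_hIter]
    norm_num
  choose m₁ hm₁ using fun n => mapsGaN hS hT (⇑h) h.continuous ε hε hg1 n
  choose m₂ hm₂ using fun n => mapsGaN hT hS (⇑h.symm) h.symm.continuous ε hε hg2 n
  have hmap1 : ∀ x z : MarkovShift A, (x, z) ∈ S.Ga → (h x, h z) ∈ T.Ga := by
    intro x z hxz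
    have hxz' : (x, z) ∈ ⋃ n : ℕ, S.GaN n := hxz
    obtain ⟨n, hn⟩ := Set.mem_iUnion.mp hxz'
    exact T.gaN_subset_ga (m₁ n) (hm₁ n x z hn)
  have hmap2 : ∀ y w : MarkovShift B, (y, w) ∈ T.Ga → (h.symm y, h.symm w) ∈ S.Ga := by
    intro y w hyw
    have hyw' : (y, w) ∈ ⋃ n : ℕ, T.GaN n := hyw
    obtain ⟨n, hn⟩ := Set.mem_iUnion.mp hyw'
    exact S.gaN_subset_ga (m₂ n) (hm₂ n y w hn)
  have xi1mem : ∀ (n : ℤ) (x : MarkovShift A),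
      (hIter T.phi (cSum S.phi (fun _ => ε) n x) (h x), h (hIter S.phi n x)) ∈ T.Ga := by
    intro n x
    rw [cSum_const, hci n x, mul_comm]
    exact hT.diag_mem_ga _
  have xi2mem : ∀ (n : ℤ) (y : MarkovShift B),
      (hIter S.phi (cSum T.phi (fun _ => ε) n y) (h.symm y),
        h.symm (hIter T.phi n y)) ∈ S.Ga := by
    intro n y
    rw [cSum_const, hcsi n y, mul_comm]
    exact hS.diag_mem_ga _
  have eta1mem : ∀ x z : MarkovShift A, (x, z) ∈ S.Ga →
      (hIter T.phi 0 (h x), h z) ∈ T.Ga := by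
    intro x z hxz
    rw [hIter_zero]
    exact hmap1 x z hxz
  have eta2mem : ∀ y w : MarkovShift B, (y, w) ∈ T.Ga →
      (hIter S.phi 0 (h.symm y), h.symm w) ∈ S.Ga := by
    intro y w hyw
    rw [hIter_zero]
    exact hmap2 y w hyw
  have xi1cont : ∀ n : ℤ, @Continuous _ _ _ T.gaTopology
      (fun x => (⟨(hIter T.phi (cSum S.phi (fun _ => ε) n x) (h x),
        h (hIter S.phi n x)), xi1mem n x⟩ : ↥T.Ga)) := by
    intro n
    refine cont_into_ga T 0
      (fun x => (hIter T.phi (cSum S.phi (fun _ => ε) n x) (h x), h (hIter S.phi n x)))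
      ?_ ?_ (fun x => xi1mem n x)
    · have e : (fun x : MarkovShift A =>
          (hIter T.phi (cSum S.phi (fun _ => ε) n x) (h x), h (hIter S.phi n x)))
          = fun x => (hIter T.phi (n * ε) (h x), h (hIter S.phi n x)) := by
        funext x; rw [cSum_const]
      rw [e]
      exact ((hIter_continuous T.phi (n * ε)).comp h.continuous).prodMk
        (h.continuous.comp (hIter_continuous S.phi n))
    · intro x
      have e1 : hIter T.phi (cSum S.phi (fun _ : MarkovShift A => ε) n x) (h x)
          = h (hIter S.phi n x) := by
        rw [cSum_const, hci n x, mul_comm]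
      rw [e1]
      exact hT.diag_mem_gaN 0 _
  have xi2cont : ∀ n : ℤ, @Continuous _ _ _ S.gaTopology
      (fun y => (⟨(hIter S.phi (cSum T.phi (fun _ => ε) n y) (h.symm y),
        h.symm (hIter T.phi n y)), xi2mem n y⟩ : ↥S.Ga)) := by
    intro n
    refine cont_into_ga S 0
      (fun y => (hIter S.phi (cSum T.phi (fun _ => ε) n y) (h.symm y),
        h.symm (hIter T.phi n y)))
      ?_ ?_ (fun y => xi2mem n y)
    · have e : (fun y : MarkovShift B =>
          (hIter S.phi (cSum T.phi (fun _ => ε) n y) (h.symm y), h.symm (hIter T.phi n y)))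
          = fun y => (hIter S.phi (n * ε) (h.symm y), h.symm (hIter T.phi n y)) := by
        funext y; rw [cSum_const]
      rw [e]
      exact ((hIter_continuous S.phi (n * ε)).comp h.symm.continuous).prodMk
        (h.symm.continuous.comp (hIter_continuous T.phi n))
    · intro y
      have e1 : hIter S.phi (cSum T.phi (fun _ : MarkovShift B => ε) n y) (h.symm y)
          = h.symm (hIter T.phi n y) := by
        rw [cSum_const, hcsi n y, mul_comm]
      rw [e1]
      exact hS.diag_mem_gaN 0 _
  have eta1cont : @Continuous _ _ S.gaTopology T.gaTopology
      (fun p : ↥S.Ga => (⟨(hIter T.phi 0 (h p.val.1), h p.val.2),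
        eta1mem p.val.1 p.val.2 p.2⟩ : ↥T.Ga)) := by
    rw [show S.gaTopology = ⨆ n : ℕ, TopologicalSpace.coinduced
      (Set.inclusion (S.gaN_subset_ga n)) inferInstance from rfl, continuous_iSup_dom]
    intro n
    rw [continuous_coinduced_dom]
    refine cont_into_ga T (m₁ n)
      (fun q : ↥(S.GaN ((n : ℕ) : ℤ)) =>
        (hIter T.phi 0 (h q.val.1), h q.val.2)) ?_ ?_ ?_
    · exact ((hIter_continuous T.phi 0).comp
        (h.continuous.comp (continuous_fst.comp continuous_subtype_val))).prodMk
        (h.continuous.comp (continuous_snd.comp continuous_subtype_val))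
    · intro q
      rw [hIter_zero]
      exact hm₁ n _ _ q.2
  have eta2cont : @Continuous _ _ T.gaTopology S.gaTopology
      (fun p : ↥T.Ga => (⟨(hIter S.phi 0 (h.symm p.val.1), h.symm p.val.2),
        eta2mem p.val.1 p.val.2 p.2⟩ : ↥S.Ga)) := by
    rw [show T.gaTopology = ⨆ n : ℕ, TopologicalSpace.coinduced
      (Set.inclusion (T.gaN_subset_ga n)) inferInstance from rfl, continuous_iSup_dom]
    intro n
    rw [continuous_coinduced_dom]
    refine cont_into_ga S (m₂ n)
      (fun q : ↥(T.GaN ((n : ℕ) : ℤ)) =>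
        (hIter S.phi 0 (h.symm q.val.1), h.symm q.val.2)) ?_ ?_ ?_
    · exact ((hIter_continuous S.phi 0).comp
        (h.symm.continuous.comp (continuous_fst.comp continuous_subtype_val))).prodMk
        (h.symm.continuous.comp (continuous_snd.comp continuous_subtype_val))
    · intro q
      rw [hIter_zero]
      exact hm₂ n _ _ q.2
  exact ⟨{ h := h,
           c₁ := fun _ => ε,
           c₂ := fun _ => ε,
           d₁ := fun _ _ => 0,
           d₂ := fun _ _ => 0,
           c₁_cont := continuous_const,
           c₂_cont := continuous_const,
           d₁_cocycle := by intros; norm_num,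
           d₂_cocycle := by intros; norm_num,
           d₁_cont := @continuous_const _ _ S.gaTopology _ _,
           d₂_cont := @continuous_const _ _ T.gaTopology _ _,
           cocycle_eq₁ := by intro m x z _; simp [cSum_const],
           cocycle_eq₂ := by intro m y w _; simp [cSum_const],
           xi₁_mem := xi1mem,
           xi₁_cont := xi1cont,
           xi₂_mem := xi2mem,
           xi₂_cont := xi2cont,
           eta₁_mem := eta1mem,
           eta₁_cont := eta1cont,
           eta₂_mem := eta2mem,
           eta₂_cont := eta2cont,
           cond_v := by
             intro n x
             simp only [cSum_const]
             rw [mul_assoc, hsq]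
             ring,
           cond_vi := by
             intro n y
             simp only [cSum_const]
             rw [mul_assoc, hsq]
             ring,
           cond_vii := by intro x z _; simp [cSum_const],
           cond_viii := by intro y w _; simp [cSum_const] },
    rfl, rfl, rfl, rfl⟩

end Conj


section Backward

variable {N₁ N₂ : ℕ} {A : Matrix (Fin N₁) (Fin N₁) ℕ} {B : Matrix (Fin N₂) (Fin N₂) ℕ}
  [MetricSpace (MarkovShift A)] [CompactSpace (MarkovShift A)]
  [MetricSpace (MarkovShift B)] [CompactSpace (MarkovShift B)]
  {lam₀ : ℝ} {S : SmaleSpace (MarkovShift A)} {T : SmaleSpace (MarkovShift B)}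

theorem backward (hS : Good A lam₀ S) (hT : Good B lam₀ T)
    (A0 : SmaleSpace.ACOEData S T) (ε : ℤ) (hε : ε = 1 ∨ ε = -1)
    (hc₁ : A0.c₁ = fun _ => ε) (hc₂ : A0.c₂ = fun _ => ε) :
    SmaleSpace.FlipConjugate S T := by
  obtain ⟨m₁, hm₁⟩ := hT.uniformize _ (A0.xi₁_cont 1)
  obtain ⟨m₂, hm₂⟩ := hS.uniformize _ (A0.xi₂_cont 1)
  have e1 : ∀ x : MarkovShift A, cSum S.phi A0.c₁ 1 x = ε := by
    intro x; rw [hc₁, cSum_const]; ring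
  have e2 : ∀ y : MarkovShift B, cSum T.phi A0.c₂ 1 y = ε := by
    intro y; rw [hc₂, cSum_const]; ring
  have H1 : ∀ (x : MarkovShift A) (j : ℤ), ((m₁ + 1 : ℕ) : ℤ) ≤ |j| →
      (A0.h (S.phi x)).seq j = (A0.h x).seq (j + ε) := by
    intro x j hj
    have h1 : (hIter T.phi (cSum S.phi A0.c₁ 1 x) (A0.h x),
        A0.h (hIter S.phi 1 x)) ∈ T.GaN (m₁ : ℤ) := hm₁ x
    have h2 := (hT.gaN_iff (m₁ : ℤ) _ _).mp h1 j
      (by rw [Int.abs_eq_natAbs] at hj; omega)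
    rw [e1 x, hT.seq_hIter, hIter_one] at h2
    exact h2.symm
  have H2 : ∀ (y : MarkovShift B) (j : ℤ), ((m₂ + 1 : ℕ) : ℤ) ≤ |j| →
      (A0.h.symm (T.phi y)).seq j = (A0.h.symm y).seq (j + ε) := by
    intro y j hj
    have h1 : (hIter S.phi (cSum T.phi A0.c₂ 1 y) (A0.h.symm y),
        A0.h.symm (hIter T.phi 1 y)) ∈ S.GaN (m₂ : ℤ) := hm₂ y
    have h2 := (hS.gaN_iff (m₂ : ℤ) _ _).mp h1 j
      (by rw [Int.abs_eq_natAbs] at hj; omega)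
    rw [e2 y, hS.seq_hIter, hIter_one] at h2
    exact h2.symm
  rcases hε with rfl | rfl
  · -- conjugate case
    let DIn : TData A B := ⟨⇑A0.h, A0.h.continuous, S.phi, 1, Or.inl rfl, m₁ + 1, H1⟩
    let DOut : TData B A := ⟨⇑A0.h.symm, A0.h.symm.continuous, T.phi, 1, Or.inl rfl,
      m₂ + 1, H2⟩
    have comp1 : ∀ x, DOut.K (DIn.K x) = x := fun x =>
      TData.comp_id hS hT DIn DOut 1 1 hS.hphi hT.hphi (Or.inl rfl)
        (fun x => A0.h.symm_apply_apply x) (by norm_num) rfl x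
    have comp2 : ∀ y, DIn.K (DOut.K y) = y := fun y =>
      TData.comp_id hT hS DOut DIn 1 1 hT.hphi hS.hphi (Or.inl rfl)
        (fun y => A0.h.apply_symm_apply y) (by norm_num) rfl y
    refine ⟨{ toEquiv := ⟨DIn.K, DOut.K, comp1, comp2⟩,
              continuous_toFun := DIn.K_cont hT,
              continuous_invFun := DOut.K_cont hS }, Or.inl ?_⟩
    intro x
    apply MarkovShift.ext_seq
    intro i
    rw [hT.hphi]
    exact DIn.K_step x i
  · -- flip case
    have H2' : ∀ (y : MarkovShift B) (j : ℤ), ((m₂ + 2 : ℕ) : ℤ) ≤ |j| →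
        (A0.h.symm (T.phi.symm y)).seq j = (A0.h.symm y).seq (j + 1) := by
      intro y j hj
      have h1 := H2 (T.phi.symm y) (j + 1)
        (by rw [Int.abs_eq_natAbs] at hj ⊢; omega)
      rw [T.phi.apply_symm_apply, show j + 1 + -1 = j by ring] at h1
      exact h1.symm
    let DIn : TData A B := ⟨⇑A0.h, A0.h.continuous, S.phi, -1, Or.inr rfl, m₁ + 1, H1⟩
    let DOut : TData B A := ⟨⇑A0.h.symm, A0.h.symm.continuous, T.phi.symm, 1, Or.inl rfl,
      m₂ + 2, H2'⟩
    have comp1 : ∀ x, DOut.K (DIn.K x) = x := fun x =>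
      TData.comp_id hS hT DIn DOut 1 (-1) hS.hphi hT.hphi_symm (Or.inr rfl)
        (fun x => A0.h.symm_apply_apply x) (by norm_num) rfl x
    have comp2 : ∀ y, DIn.K (DOut.K y) = y := fun y =>
      TData.comp_id hT hS DOut DIn (-1) 1 hT.hphi_symm hS.hphi (Or.inl rfl)
        (fun y => A0.h.apply_symm_apply y) (by norm_num) rfl y
    refine ⟨{ toEquiv := ⟨DIn.K, DOut.K, comp1, comp2⟩,
              continuous_toFun := DIn.K_cont hT,
              continuous_invFun := DOut.K_cont hS }, Or.inr ?_⟩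
    intro x
    apply MarkovShift.ext_seq
    intro i
    rw [hT.hphi_symm]
    exact DIn.K_step x i

end Backward

/-- For irreducible non-permutation 0-1 matrices `A` and `B`, the two-sided
topological Markov shifts `(X̄_A, σ̄_A)` and `(X̄_B, σ̄_B)` (viewed as Smale spaces with
the standard metric, constants `ε = λ = λ₀`, shift homeomorphism and bracket) are flip
conjugate if and only if they are asymptotically flip conjugate. -/
theorem markov_flipConjugate_iff_asymptoticallyFlipConjugate
    {N M : ℕ} (A : Matrix (Fin N) (Fin N) ℕ) (B : Matrix (Fin M) (Fin M) ℕ)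
    (hA01 : ∀ i j, A i j = 0 ∨ A i j = 1) (hB01 : ∀ i j, B i j = 0 ∨ B i j = 1)
    (hAirr : ∀ i j, ∃ k : ℕ, 0 < k ∧ 0 < (A ^ k) i j)
    (hBirr : ∀ i j, ∃ k : ℕ, 0 < k ∧ 0 < (B ^ k) i j)
    (hAnp : ¬ ∃ σ : Equiv.Perm (Fin N), ∀ i j, A i j = 1 ↔ σ i = j)
    (hBnp : ¬ ∃ σ : Equiv.Perm (Fin M), ∀ i j, B i j = 1 ↔ σ i = j)
    (lam₀ : ℝ) (hlam₀ : 0 < lam₀ ∧ lam₀ < 1)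
    [MetricSpace (MarkovShift A)] [CompactSpace (MarkovShift A)]
    [MetricSpace (MarkovShift B)] [CompactSpace (MarkovShift B)]
    (hdA : ∀ x z : MarkovShift A, x ≠ z → dist x z
      = lam₀ ^ sInf {k : ℕ | ∃ i : ℤ, i.natAbs = k ∧ x.seq i ≠ z.seq i})
    (hdB : ∀ x z : MarkovShift B, x ≠ z → dist x z
      = lam₀ ^ sInf {k : ℕ | ∃ i : ℤ, i.natAbs = k ∧ x.seq i ≠ z.seq i})
    (S : SmaleSpace (MarkovShift A)) (T : SmaleSpace (MarkovShift B))
    (hSphi : ∀ (x : MarkovShift A) (i : ℤ), (S.phi x).seq i = x.seq (i + 1))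
    (hTphi : ∀ (x : MarkovShift B) (i : ℤ), (T.phi x).seq i = x.seq (i + 1))
    (hSeps : S.eps = lam₀) (hSlam : S.lam = lam₀)
    (hTeps : T.eps = lam₀) (hTlam : T.lam = lam₀)
    (hSbr : ∀ x z : MarkovShift A, dist x z < lam₀ → ∀ i : ℤ,
      (S.br x z).seq i = if i ≤ 0 then x.seq i else z.seq i)
    (hTbr : ∀ x z : MarkovShift B, dist x z < lam₀ → ∀ i : ℤ,
      (T.br x z).seq i = if i ≤ 0 then x.seq i else z.seq i) :
    SmaleSpace.FlipConjugate S T ↔ SmaleSpace.AsymptoticallyFlipConjugate S T := by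
  have hS : Good A lam₀ S := ⟨hlam₀.1, hlam₀.2, hdA, hSphi, hSeps, hSbr⟩
  have hT : Good B lam₀ T := ⟨hlam₀.1, hlam₀.2, hdB, hTphi, hTeps, hTbr⟩
  constructor
  · rintro ⟨h, hfc⟩
    rcases hfc with hc | hc
    · obtain ⟨A0, h1, h2, h3, h4⟩ := forward_data hS hT h 1 (Or.inl rfl)
        (fun x => by rw [hIter_one]; exact hc x)
      exact ⟨A0, Or.inl ⟨h1, h2, h3, h4⟩⟩
    · obtain ⟨A0, h1, h2, h3, h4⟩ := forward_data hS hT h (-1) (Or.inr rfl)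
        (fun x => by rw [hIter_neg_one]; exact hc x)
      exact ⟨A0, Or.inr ⟨h1, h2, h3, h4⟩⟩
  · rintro ⟨A0, hd⟩
    rcases hd with ⟨hc₁, hc₂, _, _⟩ | ⟨hc₁, hc₂, _, _⟩
    · exact backward hS hT A0 1 (Or.inl rfl) hc₁ hc₂
    · exact backward hS hT A0 (-1) (Or.inr rfl) hc₁ hc₂
end
end
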